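/- arXiv:0709.3348 — 7 statements merged into one kernel-verified Lean document; each statement's English description precedes it below -/
import Mathlib

section
/- Let X be a Banach space and let A and B be bounded linear operators on X with A∘B = B∘A. Then for every x ∈ X and every t ≥ 0, (B − A) applied to the Bochner integral ∫₀ᵗ exp((t−s)A)(exp(sB)x) ds equals exp(tB)x − exp(tA)x. (This is the first identity of Lemma 2 of the paper, in the bounded-generator case; when B − A is bijective it reads ∫₀ᵗ T_A(t−s)T_B(s)x ds = (B−A)⁻¹(T_B(t) − T_A(t))x.) -/
open NormedSpace intervalIntegral MeasureTheory

set_option maxHeartbeats 1000000 in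
set_option synthInstance.maxHeartbeats 400000 in
/-- **Lemma 2 of the paper (first identity), bounded-generator case.**
For commuting bounded operators `A, B` on a Banach space `X`, every `x ∈ X` and `t ≥ 0`,
`(B − A) ∫₀ᵗ exp((t−s)A)(exp(sB)x) ds = exp(tB)x − exp(tA)x`. -/
theorem dAlembert_lemma2_first {X : Type*} [NormedAddCommGroup X] [NormedSpace ℝ X]
    [CompleteSpace X] (A B : X →L[ℝ] X) (hAB : A ∘L B = B ∘L A)
    (x : X) (t : ℝ) (ht : 0 ≤ t) :
    (B - A) (∫ s in (0:ℝ)..t,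
        (NormedSpace.exp ((t - s) • A)) ((NormedSpace.exp (s • B)) x))
      = (NormedSpace.exp (t • B)) x - (NormedSpace.exp (t • A)) x := by
  have hcomm : Commute A B := hAB
  set g : ℝ → (X →L[ℝ] X) := fun s => exp ((t - s) • A) * exp (s • B) with hg
  have hderiv : ∀ s : ℝ, HasDerivAt g ((B - A) * g s) s := by
    intro s
    have hsub : HasDerivAt (fun u : ℝ => t - u) (-1) s := by
      simpa using (hasDerivAt_id s).const_sub t
    have h1 : HasDerivAt (fun u : ℝ => exp ((t - u) • A))
        (-(exp ((t - s) • A) * A)) s := by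
      have := HasDerivAt.scomp (𝕜 := ℝ) s
        (hasDerivAt_exp_smul_const (𝕂 := ℝ) A (t - s)) hsub
      simpa [Function.comp_def] using this
    have h2 : HasDerivAt (fun u : ℝ => exp (u • B))
        (exp (s • B) * B) s := hasDerivAt_exp_smul_const (𝕂 := ℝ) B s
    have hd := h1.mul h2
    refine hd.congr_deriv ?_
    have cAB : Commute (exp ((t - s) • A)) B :=
      ((hcomm.symm.smul_right (t - s)).symm.exp_left)
    have cAeB : Commute A (exp ((t - s) • A)) :=
      ((Commute.refl A).smul_right (t - s)).exp_right
    have cBeB : Commute (exp (s • B)) B :=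
      (((Commute.refl B).smul_left s).exp_left)
    have e1 : B * (exp ((t - s) • A) * exp (s • B))
        = exp ((t - s) • A) * (exp (s • B) * B) := by
      rw [← mul_assoc, ← cAB.eq, mul_assoc, ← cBeB.eq]
    have e2 : A * (exp ((t - s) • A) * exp (s • B))
        = exp ((t - s) • A) * A * exp (s • B) := by
      rw [← mul_assoc, cAeB.eq]
    symm
    change (B - A) * (exp ((t - s) • A) * exp (s • B)) = _
    rw [sub_mul, e1, e2, neg_mul]
    abel
  have hcont : Continuous fun s => g s x := by
    rw [continuous_iff_continuousAt]
    intro s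
    exact (((ContinuousLinearMap.apply ℝ X x).hasFDerivAt.comp_hasDerivAt s
      (hderiv s))).continuousAt
  have hf : ∀ s : ℝ, HasDerivAt (fun s => g s x) ((B - A) (g s x)) s := by
    intro s
    have := (ContinuousLinearMap.apply ℝ X x).hasFDerivAt.comp_hasDerivAt s (hderiv s)
    simpa [ContinuousLinearMap.mul_apply, Function.comp_def] using this
  have hint : IntervalIntegrable (fun s => g s x) volume 0 t :=
    hcont.intervalIntegrable 0 t
  have hint' : IntervalIntegrable (fun s => (B - A) (g s x)) volume 0 t :=
    ((B - A).continuous.comp hcont).intervalIntegrable 0 t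
  have key : (∫ s in (0:ℝ)..t, (B - A) (g s x)) = g t x - g 0 x :=
    integral_eq_sub_of_hasDerivAt (fun s _ => hf s) hint'
  have hswap : (∫ s in (0:ℝ)..t, (B - A) (g s x))
      = (B - A) (∫ s in (0:ℝ)..t, g s x) :=
    (B - A).intervalIntegral_comp_comm hint
  have hInteg : (∫ s in (0:ℝ)..t,
      (NormedSpace.exp ((t - s) • A)) ((NormedSpace.exp (s • B)) x))
      = ∫ s in (0:ℝ)..t, g s x := by
    simp only [hg, ContinuousLinearMap.mul_apply]
  rw [hInteg, ← hswap, key]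
  simp [hg, NormedSpace.exp_zero, ContinuousLinearMap.mul_apply]
end

section
/- Let X be a Banach space, let A and B be bounded linear operators on X with A∘B = B∘A, let x ∈ X, let k ≥ 1 be an integer and t ≥ 0. Then (B − A) applied to ∫₀ᵗ exp((t−s)A)((sᵏ/k!)·exp(sB)x) ds equals (tᵏ/k!)·exp(tB)x − ∫₀ᵗ exp((t−s)A)((s^{k−1}/(k−1)!)·exp(sB)x) ds. (This is the recursion identity of Lemma 2 of the paper, in the bounded-generator case.) -/
open NormedSpace

set_option synthInstance.maxHeartbeats 800000 in
set_option maxHeartbeats 2000000 in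
/-- **Lemma 2 of the paper (recursion identity), bounded-generator case.**
For commuting bounded operators `A, B`, `x ∈ X`, an integer `k ≥ 1` and `t ≥ 0`,
`(B − A) ∫₀ᵗ exp((t−s)A)((sᵏ/k!)·exp(sB)x) ds
  = (tᵏ/k!)·exp(tB)x − ∫₀ᵗ exp((t−s)A)((s^{k−1}/(k−1)!)·exp(sB)x) ds`. -/
theorem dAlembert_lemma2_recursion {X : Type*} [NormedAddCommGroup X] [NormedSpace ℝ X]
    [CompleteSpace X] (A B : X →L[ℝ] X) (hAB : A ∘L B = B ∘L A)
    (x : X) (k : ℕ) (hk : 1 ≤ k) (t : ℝ) (ht : 0 ≤ t) :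
    (B - A) (∫ s in (0:ℝ)..t,
        (NormedSpace.exp ((t - s) • A))
          ((s ^ k / (Nat.factorial k : ℝ)) • (NormedSpace.exp (s • B)) x))
      = (t ^ k / (Nat.factorial k : ℝ)) • (NormedSpace.exp (t • B)) x
        - ∫ s in (0:ℝ)..t,
            (NormedSpace.exp ((t - s) • A))
              ((s ^ (k - 1) / (Nat.factorial (k - 1) : ℝ)) •
                (NormedSpace.exp (s • B)) x) := by
  have hcomm : Commute A B := hAB
  set C : X →L[ℝ] X := B - A with hCdef
  have hAC : Commute A C := hcomm.sub_right (Commute.refl A)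
  have hCA : Commute C A := hAC.symm
  have hCC : Commute C C := Commute.refl C
  letI : NormedAlgebra ℚ (X →L[ℝ] X) := NormedAlgebra.restrictScalars ℚ ℝ (X →L[ℝ] X)
  -- the key operator identity
  have key : ∀ s : ℝ, exp ((t - s) • A) * exp (s • B) = exp (t • A) * exp (s • C) := by
    intro s
    rw [← exp_add_of_commute ((hcomm.smul_left (t - s)).smul_right s),
        ← exp_add_of_commute ((hAC.smul_left t).smul_right s)]
    congr 1
    rw [hCdef, sub_smul, smul_sub]
    abel
  set φ : (X →L[ℝ] X) →L[ℝ] X :=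
    (ContinuousLinearMap.apply ℝ X x).comp
      ((ContinuousLinearMap.mul ℝ (X →L[ℝ] X)) (exp (t • A))) with hφdef
  have hφ : ∀ T : X →L[ℝ] X, φ T = (exp (t • A) * T) x := fun T => rfl
  have hfun : ∀ (s c : ℝ), exp ((t - s) • A) (c • exp (s • B) x)
      = c • φ (exp (s • C)) := by
    intro s c
    rw [map_smul]
    congr 1
    calc exp ((t - s) • A) (exp (s • B) x)
        = (exp ((t - s) • A) * exp (s • B)) x := rfl
      _ = (exp (t • A) * exp (s • C)) x := by rw [key s]
      _ = φ (exp (s • C)) := rfl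
  have hCφ : ∀ s : ℝ, φ (exp (s • C) * C) = C (φ (exp (s • C))) := by
    intro s
    rw [hφ, hφ]
    have h1 : Commute C (exp (t • A)) := ((hCA.smul_right t).exp_right)
    have h2 : Commute C (exp (s • C)) := ((hCC.smul_right s).exp_right)
    have : exp (t • A) * (exp (s • C) * C) = C * (exp (t • A) * exp (s • C)) := by
      rw [h2.symm.eq, ← mul_assoc, h1.symm.eq, mul_assoc]
    rw [this]
    rfl
  have hk0 : k ≠ 0 := by omega
  -- derivative of the scalar coefficient
  have hp : ∀ s : ℝ, HasDerivAt (fun s : ℝ => s ^ k / (Nat.factorial k : ℝ))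
      (s ^ (k - 1) / (Nat.factorial (k - 1) : ℝ)) s := by
    intro s
    have h := (hasDerivAt_pow k s).div_const (Nat.factorial k : ℝ)
    refine h.congr_deriv ?_
    rw [← Nat.mul_factorial_pred (by omega : k ≠ 0)]
    push_cast
    rw [mul_div_mul_left _ _ (by exact_mod_cast hk0 : (k : ℝ) ≠ 0)]
  -- derivative of the full integrand
  have hF : ∀ s : ℝ, HasDerivAt
      (fun s : ℝ => exp ((t - s) • A) ((s ^ k / (Nat.factorial k : ℝ)) • exp (s • B) x))
      (exp ((t - s) • A) ((s ^ (k - 1) / (Nat.factorial (k - 1) : ℝ)) • exp (s • B) x)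
        + C (exp ((t - s) • A) ((s ^ k / (Nat.factorial k : ℝ)) • exp (s • B) x))) s := by
    intro s
    have hg : HasDerivAt (fun s : ℝ => φ (exp (s • C))) (φ (exp (s • C) * C)) s :=
      φ.hasFDerivAt.comp_hasDerivAt s (hasDerivAt_exp_smul_const C s)
    have h1 := (hp s).smul hg
    have hfe : (fun s : ℝ =>
        exp ((t - s) • A) ((s ^ k / (Nat.factorial k : ℝ)) • exp (s • B) x))
        = fun s : ℝ => (s ^ k / (Nat.factorial k : ℝ)) • φ (exp (s • C)) := by
      funext u; exact hfun u _
    rw [hfe]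
    convert h1 using 1
    · rfl
    rw [hfun s, hfun s, map_smul, hCφ s]
    abel
  -- continuity / integrability
  have hcont : ∀ m : ℕ, Continuous fun s : ℝ =>
      exp ((t - s) • A) ((s ^ m / (Nat.factorial m : ℝ)) • exp (s • B) x) := by
    intro m
    have h1 : Continuous fun s : ℝ => exp ((t - s) • A) :=
      exp_continuous.comp ((continuous_const.sub continuous_id).smul continuous_const)
    have h2 : Continuous fun s : ℝ => (s ^ m / (Nat.factorial m : ℝ)) • exp (s • B) x :=
      ((continuous_pow m).div_const _).smul
        ((exp_continuous.comp (continuous_id.smul continuous_const)).clm_apply continuous_const)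
    exact h1.clm_apply h2
  have hint1 : IntervalIntegrable (fun s : ℝ =>
      exp ((t - s) • A) ((s ^ k / (Nat.factorial k : ℝ)) • exp (s • B) x))
      MeasureTheory.volume 0 t := (hcont k).intervalIntegrable 0 t
  have hint2 : IntervalIntegrable (fun s : ℝ =>
      exp ((t - s) • A) ((s ^ (k - 1) / (Nat.factorial (k - 1) : ℝ)) • exp (s • B) x))
      MeasureTheory.volume 0 t := (hcont (k - 1)).intervalIntegrable 0 t
  have hintC : IntervalIntegrable (fun s : ℝ =>
      C (exp ((t - s) • A) ((s ^ k / (Nat.factorial k : ℝ)) • exp (s • B) x)))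
      MeasureTheory.volume 0 t := (C.continuous.comp (hcont k)).intervalIntegrable 0 t
  have hFTC := intervalIntegral.integral_eq_sub_of_hasDerivAt
    (f := fun s : ℝ => exp ((t - s) • A) ((s ^ k / (Nat.factorial k : ℝ)) • exp (s • B) x))
    (fun s _ => hF s) (hint2.add hintC)
  rw [intervalIntegral.integral_add hint2 hintC,
      C.intervalIntegral_comp_comm hint1] at hFTC
  have hFt : exp ((t - t) • A) ((t ^ k / (Nat.factorial k : ℝ)) • exp (t • B) x)
      = (t ^ k / (Nat.factorial k : ℝ)) • exp (t • B) x := by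
    rw [sub_self, zero_smul, exp_zero, ContinuousLinearMap.one_apply]
  have hF0 : exp ((t - 0) • A) (((0:ℝ) ^ k / (Nat.factorial k : ℝ)) • exp ((0:ℝ) • B) x)
      = 0 := by
    rw [zero_pow hk0, zero_div, zero_smul, map_zero]
  beta_reduce at hFTC
  rw [hFt, hF0, sub_zero] at hFTC
  rw [← hFTC]
  abel
end

section
/- Let X be a Banach space, let B₁,…,Bᵢ be pairwise commuting bounded linear operators on X, let S₁,…,Sᵢ ≥ 1 be integers with S₁ + ⋯ + Sᵢ = n, and for each j ∈ {1,…,i} and k ∈ {0,…,S_j−1} let y_{j,k} ∈ X. Define u(t) = Σ_{j=1}^{i} Σ_{k=0}^{S_j−1} (tᵏ/k!)·exp(tB_j) y_{j,k}. Then: (a) u is n-times differentiable and (d/dt − B₁)^{S₁} ∘ ⋯ ∘ (d/dt − Bᵢ)^{Sᵢ} u = 0; and (b) for every m ∈ {0,…,n−1}, the m-th derivative of u at 0 equals Σ_{j=1}^{i} Σ_{k=0}^{min(m, S_j−1)} (m choose k)·B_j^{m−k} y_{j,k}, i.e. the initial-data vector (u(0), u'(0), …, u^{(n−1)}(0)) equals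 Mₙ applied to the coefficient vector (y_{j,k}). (The existence and initial-data part of Theorem 1 of the paper, in the bounded-generator case.) -/
open scoped Classical


/-- `u` is (at least) `n`-times differentiable. -/
def NTimesDifferentiable {X : Type*} [NormedAddCommGroup X] [NormedSpace ℝ X]
    (n : ℕ) (u : ℝ → X) : Prop :=
  ∀ m < n, Differentiable ℝ (iteratedDeriv m u)

/-- The first-order factor `(d/dt − A)` acting on functions `ℝ → X`. -/
noncomputable def factorOp {X : Type*} [NormedAddCommGroup X] [NormedSpace ℝ X]
    (A : X →L[ℝ] X) (u : ℝ → X) : ℝ → X :=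
  fun t => deriv u t - A (u t)

/-- The composite factored operator `(d/dt − B₁)^{S₁} ∘ ⋯ ∘ (d/dt − Bᵢ)^{Sᵢ}`
(the last factor `(d/dt − Bᵢ)^{Sᵢ}` is applied first). -/
noncomputable def applyFactors {X : Type*} [NormedAddCommGroup X] [NormedSpace ℝ X]
    {i : ℕ} (B : Fin i → X →L[ℝ] X) (S : Fin i → ℕ) (u : ℝ → X) : ℝ → X :=
  (List.ofFn fun j : Fin i => (factorOp (B j))^[S j]).foldr (· ∘ ·) id u


open NormedSpace Finset

set_option maxHeartbeats 1000000
set_option synthInstance.maxHeartbeats 200000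
set_option linter.unusedSectionVars false

section
variable {X : Type*} [NormedAddCommGroup X] [NormedSpace ℝ X] [CompleteSpace X]

/-- A single "polynomial times exponential" combination. -/
noncomputable def comb (A : X →L[ℝ] X) (N : ℕ) (c : ℕ → X) : ℝ → X :=
  fun t => ∑ k ∈ Finset.range N,
    (t ^ k / (Nat.factorial k : ℝ)) • (NormedSpace.exp (t • A)) (c k)

lemma term_hasDerivAt (A : X →L[ℝ] X) (k : ℕ) (z : X) (t : ℝ) :
    HasDerivAt (fun s : ℝ => (s ^ k / (Nat.factorial k : ℝ)) • (exp (s • A)) z)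
      ((t ^ k / (Nat.factorial k : ℝ)) • (exp (t • A)) (A z)
        + ((k : ℝ) * t ^ (k - 1) / (Nat.factorial k : ℝ)) • (exp (t • A)) z) t := by
  have h1 : HasDerivAt (fun s : ℝ => s ^ k / (Nat.factorial k : ℝ))
      ((k : ℝ) * t ^ (k - 1) / (Nat.factorial k : ℝ)) t :=
    (hasDerivAt_pow k t).div_const _
  have h2 : HasDerivAt (fun s : ℝ => (exp (s • A)) z) ((exp (t • A)) (A z)) t := by
    have := (hasDerivAt_exp_smul_const (𝕂 := ℝ) A t).clm_apply (hasDerivAt_const t z)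
    simpa using this
  simpa [add_comm] using h1.fun_smul h2

lemma shift_sum (A : X →L[ℝ] X) (N : ℕ) (c : ℕ → X) (hcN : c N = 0) (t : ℝ) :
    (∑ k ∈ Finset.range N,
        ((k : ℝ) * t ^ (k - 1) / (Nat.factorial k : ℝ)) • (exp (t • A)) (c k))
      = ∑ k ∈ Finset.range N, (t ^ k / (Nat.factorial k : ℝ)) • (exp (t • A)) (c (k + 1)) := by
  cases N with
  | zero => simp
  | succ M =>
    rw [Finset.sum_range_succ' (fun k =>
        ((k : ℝ) * t ^ (k - 1) / (Nat.factorial k : ℝ)) • (exp (t • A)) (c k)),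
      Finset.sum_range_succ]
    simp only [hcN, map_zero, smul_zero, add_zero, Nat.cast_zero, zero_mul, zero_div, zero_smul]
    refine Finset.sum_congr rfl fun k _ => ?_
    congr 1
    rw [Nat.factorial_succ]
    have hk : (Nat.factorial k : ℝ) ≠ 0 := Nat.cast_ne_zero.mpr (Nat.factorial_ne_zero k)
    push_cast
    field_simp

lemma comb_hasDerivAt (A : X →L[ℝ] X) (N : ℕ) (c : ℕ → X) (hcN : c N = 0) (t : ℝ) :
    HasDerivAt (comb A N c) (comb A N (fun k => c (k + 1) + A (c k)) t) t := by
  have H := HasDerivAt.fun_sum (fun k (_ : k ∈ Finset.range N) => term_hasDerivAt A k (c k) t)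
  convert H using 1
  · rfl
  rw [comb]
  simp only [map_add, smul_add]
  rw [Finset.sum_add_distrib, ← shift_sum A N c hcN t, ← Finset.sum_add_distrib]
  exact Finset.sum_congr rfl fun k _ => add_comm _ _

lemma comb_differentiable (A : X →L[ℝ] X) (N : ℕ) (c : ℕ → X) :
    Differentiable ℝ (comb A N c) := fun t =>
  (HasDerivAt.fun_sum (fun k (_ : k ∈ Finset.range N) =>
    term_hasDerivAt A k (c k) t)).differentiableAt

lemma exp_comm_apply {A C : X →L[ℝ] X} (h : C ∘L A = A ∘L C) (t : ℝ) (z : X) :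
    C ((exp (t • A)) z) = (exp (t • A)) (C z) := by
  have hc : Commute C A := h
  have hc2 : Commute (t • A) C := ((hc.smul_right t).symm)
  have h3 : Commute (exp (t • A)) C := hc2.exp_left
  have := DFunLike.congr_fun h3.eq z
  simpa [ContinuousLinearMap.mul_apply] using this.symm

end
section
variable {X : Type*} [NormedAddCommGroup X] [NormedSpace ℝ X] [CompleteSpace X]

/-- Sum of `comb`s over finitely many generators. -/
noncomputable def GRep {p : ℕ} (A : Fin p → X →L[ℝ] X) (N : ℕ)
    (c : Fin p → ℕ → X) : ℝ → X :=
  fun t => ∑ x, comb (A x) N (c x) t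

/-- The coefficient transform corresponding to `d/dt`. -/
noncomputable def Dc {p : ℕ} (A : Fin p → X →L[ℝ] X) (c : Fin p → ℕ → X) :
    Fin p → ℕ → X :=
  fun x k => c x (k + 1) + A x (c x k)

lemma GRep_hasDerivAt {p : ℕ} (A : Fin p → X →L[ℝ] X) (N : ℕ) (c : Fin p → ℕ → X)
    (hcN : ∀ x, c x N = 0) (t : ℝ) :
    HasDerivAt (GRep A N c) (GRep A N (Dc A c) t) t :=
  HasDerivAt.fun_sum fun x _ => comb_hasDerivAt (A x) N (c x) (hcN x) t

lemma GRep_differentiable {p : ℕ} (A : Fin p → X →L[ℝ] X) (N : ℕ) (c : Fin p → ℕ → X) :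
    Differentiable ℝ (GRep A N c) := fun t =>
  (HasDerivAt.fun_sum fun x (_ : x ∈ Finset.univ) =>
    (comb_differentiable (A x) N (c x) t).hasDerivAt).differentiableAt

lemma deriv_GRep {p : ℕ} (A : Fin p → X →L[ℝ] X) (N : ℕ) (c : Fin p → ℕ → X)
    (hcN : ∀ x, c x N = 0) :
    deriv (GRep A N c) = GRep A N (Dc A c) :=
  funext fun t => (GRep_hasDerivAt A N c hcN t).deriv

lemma factorOp_GRep {p : ℕ} (A : Fin p → X →L[ℝ] X) (N : ℕ) (c : Fin p → ℕ → X)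
    (C : X →L[ℝ] X) (hC : ∀ x, C ∘L A x = A x ∘L C) (hcN : ∀ x, c x N = 0) :
    factorOp C (GRep A N c)
      = GRep A N (fun x k => c x (k + 1) + A x (c x k) - C (c x k)) := by
  funext t
  rw [factorOp, deriv_GRep A N c hcN]
  rw [GRep, GRep, GRep, map_sum, ← Finset.sum_sub_distrib]
  refine Finset.sum_congr rfl fun x _ => ?_
  rw [comb, comb, comb, map_sum, ← Finset.sum_sub_distrib]
  refine Finset.sum_congr rfl fun k _ => ?_
  rw [map_smul, exp_comm_apply (hC x) t, ← smul_sub, ← map_sub]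
  rfl

lemma factorOp_iter_GRep {p : ℕ} (A : Fin p → X →L[ℝ] X) (N : ℕ)
    (C : X →L[ℝ] X) (hC : ∀ x, C ∘L A x = A x ∘L C) (m : ℕ) :
    ∀ (c : Fin p → ℕ → X) (κ : Fin p → ℕ),
      (∀ x k, κ x ≤ k → c x k = 0) → (∀ x, κ x ≤ N) →
      ∃ c' : Fin p → ℕ → X,
        (∀ x k, (if A x = C then κ x - m else κ x) ≤ k → c' x k = 0)
        ∧ (factorOp C)^[m] (GRep A N c) = GRep A N c' := by
  classical
  induction m with
  | zero =>
    intro c κ hsupp hκN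
    refine ⟨c, fun x k hk => hsupp x k ?_, rfl⟩
    by_cases h : A x = C <;> simp [h] at hk <;> omega
  | succ m ih =>
    intro c κ hsupp hκN
    obtain ⟨c', hsupp', heq⟩ := ih c κ hsupp hκN
    have hc'N : ∀ x, c' x N = 0 := fun x => hsupp' x N (by
      have := hκN x; split <;> omega)
    refine ⟨fun x k => c' x (k + 1) + A x (c' x k) - C (c' x k), fun x k hk => ?_, ?_⟩
    · by_cases h : A x = C
      · simp only [h, if_pos] at hk ⊢
        have h1 : c' x (k + 1) = 0 := hsupp' x (k + 1) (by rw [if_pos h]; omega)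
        rw [h1, zero_add, sub_self]
      · simp only [h, if_neg, if_false] at hk ⊢
        have h1 : c' x (k + 1) = 0 := hsupp' x (k + 1) (by rw [if_neg h]; omega)
        have h2 : c' x k = 0 := hsupp' x k (by rw [if_neg h]; omega)
        rw [h1, h2, map_zero, map_zero, add_zero, sub_zero]
    · rw [Function.iterate_succ_apply', heq, factorOp_GRep A N c' C hC hc'N]
end

section
variable {X : Type*} [NormedAddCommGroup X] [NormedSpace ℝ X] [CompleteSpace X]

lemma applyFactors_nil (B : Fin 0 → X →L[ℝ] X) (S : Fin 0 → ℕ) (u : ℝ → X) :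
    applyFactors B S u = u := by
  simp [applyFactors]

lemma applyFactors_succ {q : ℕ} (B : Fin (q + 1) → X →L[ℝ] X) (S : Fin (q + 1) → ℕ)
    (u : ℝ → X) :
    applyFactors B S u
      = (factorOp (B 0))^[S 0]
          (applyFactors (fun j => B j.succ) (fun j => S j.succ) u) := by
  simp [applyFactors, List.ofFn_succ]

lemma applyFactors_GRep : ∀ (q : ℕ) (B : Fin q → X →L[ℝ] X) (S : Fin q → ℕ)
    {p : ℕ} (A : Fin p → X →L[ℝ] X) (c : Fin p → ℕ → X) (κ : Fin p → ℕ) (N : ℕ),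
    (∀ x j, A x ∘L B j = B j ∘L A x) →
    (∀ x k, κ x ≤ k → c x k = 0) → (∀ x, κ x ≤ N) →
    ∃ (c' : Fin p → ℕ → X) (κ' : Fin p → ℕ),
      (∀ x k, κ' x ≤ k → c' x k = 0) ∧ (∀ x, κ' x ≤ κ x)
      ∧ (∀ x j, A x = B j → κ' x ≤ κ x - S j)
      ∧ applyFactors B S (GRep A N c) = GRep A N c' := by
  intro q
  induction q with
  | zero =>
    intro B S p A c κ N _ hsupp _
    exact ⟨c, κ, hsupp, fun x => le_rfl, fun x j => j.elim0, applyFactors_nil B S _⟩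
  | succ q ih =>
    intro B S p A c κ N hAB hsupp hκN
    obtain ⟨c₁, κ₁, h₁, hle₁, hkill₁, heq₁⟩ :=
      ih (fun j => B j.succ) (fun j => S j.succ) A c κ N
        (fun x j => hAB x j.succ) hsupp hκN
    obtain ⟨c₂, h₂, heq₂⟩ := factorOp_iter_GRep A N (B 0)
      (fun x => (hAB x 0).symm) (S 0) c₁ κ₁ h₁ (fun x => (hle₁ x).trans (hκN x))
    refine ⟨c₂, fun x => if A x = B 0 then κ₁ x - S 0 else κ₁ x, h₂, ?_, ?_, ?_⟩
    · intro x
      have := hle₁ x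
      dsimp only
      split_ifs <;> omega
    · intro x j hAx
      dsimp only
      rcases Fin.eq_zero_or_eq_succ j with rfl | ⟨l, rfl⟩
      · rw [if_pos hAx]
        exact Nat.sub_le_sub_right (hle₁ x) _
      · have h5 := hkill₁ x l hAx
        have h6 := hle₁ x
        split_ifs <;> omega
    · rw [applyFactors_succ, heq₁, heq₂]

lemma Dc_iter_supp {p : ℕ} (A : Fin p → X →L[ℝ] X) (c : Fin p → ℕ → X) (N : ℕ)
    (h : ∀ x k, N ≤ k → c x k = 0) (m : ℕ) :
    ∀ x k, N ≤ k → (Dc A)^[m] c x k = 0 := by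
  induction m with
  | zero => exact h
  | succ m ih =>
    intro x k hk
    rw [Function.iterate_succ_apply']
    show (Dc A)^[m] c x (k + 1) + A x ((Dc A)^[m] c x k) = 0
    rw [ih x (k + 1) (by omega), ih x k hk, map_zero, add_zero]

lemma iteratedDeriv_GRep {p : ℕ} (A : Fin p → X →L[ℝ] X) (N : ℕ) (c : Fin p → ℕ → X)
    (h : ∀ x k, N ≤ k → c x k = 0) (m : ℕ) :
    iteratedDeriv m (GRep A N c) = GRep A N ((Dc A)^[m] c) := by
  induction m with
  | zero => simp
  | succ m ih =>
    rw [iteratedDeriv_succ, ih,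
      deriv_GRep A N _ (fun x => Dc_iter_supp A c N h m x N le_rfl),
      Function.iterate_succ_apply']

lemma GRep_apply_zero {p : ℕ} (A : Fin p → X →L[ℝ] X) (N : ℕ) (c : Fin p → ℕ → X)
    (hN : 1 ≤ N) : GRep A N c 0 = ∑ x, c x 0 := by
  refine Finset.sum_congr rfl fun x _ => ?_
  rw [comb, Finset.sum_eq_single_of_mem 0 (Finset.mem_range.mpr hN)
    (fun k _ hk => by simp [zero_pow hk])]
  simp [NormedSpace.exp_zero]

lemma Dc_iter_formula {p : ℕ} (A : Fin p → X →L[ℝ] X) (c : Fin p → ℕ → X) :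
    ∀ (m : ℕ) (x : Fin p) (k : ℕ), (Dc A)^[m] c x k
      = ∑ r ∈ Finset.range (m + 1),
          (m.choose r : ℝ) • ((A x) ^ (m - r)) (c x (k + r)) := by
  intro m
  induction m with
  | zero => intro x k; simp
  | succ m ih =>
    intro x k
    rw [Function.iterate_succ_apply']
    have hL : (Dc A) ((Dc A)^[m] c) x k
        = (Dc A)^[m] c x (k + 1) + A x ((Dc A)^[m] c x k) := rfl
    rw [hL, ih, ih, map_sum]
    have h2 : ∀ r ∈ Finset.range (m + 1),
        A x ((m.choose r : ℝ) • ((A x) ^ (m - r)) (c x (k + r)))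
          = (m.choose r : ℝ) • ((A x) ^ (m + 1 - r)) (c x (k + r)) := by
      intro r hr
      rw [Finset.mem_range] at hr
      rw [map_smul]
      congr 1
      rw [show m + 1 - r = (m - r) + 1 from by omega, pow_succ']
      simp [ContinuousLinearMap.mul_apply]
    rw [Finset.sum_congr rfl h2]
    have h3 : ∀ r ∈ Finset.range (m + 1),
        (m.choose r : ℝ) • ((A x) ^ (m - r)) (c x (k + 1 + r))
          = (m.choose r : ℝ) • ((A x) ^ (m - r)) (c x (k + (r + 1))) := by
      intro r _; rw [show k + 1 + r = k + (r + 1) from by omega]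
    rw [Finset.sum_congr rfl h3]
    rw [Finset.sum_range_succ'
      (fun r => (m.choose r : ℝ) • ((A x) ^ (m + 1 - r)) (c x (k + r)))]
    conv_rhs => rw [Finset.sum_range_succ']
    simp only [Nat.succ_sub_succ_eq_sub, Nat.choose_succ_succ, Nat.cast_add, add_smul,
      Finset.sum_add_distrib, Nat.choose_zero_right, Nat.cast_one, one_smul,
      Nat.add_zero, Nat.sub_zero, add_zero]
    rw [Finset.sum_range_succ
      (fun s => (m.choose (s + 1) : ℝ) • ((A x) ^ (m - s)) (c x (k + (s + 1))))]
    simp only [Nat.choose_succ_self, Nat.cast_zero, zero_smul, add_zero]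
    abel
end

/-- **Theorem 1 of the paper (existence and initial data), bounded-generator case:**
`u(t) = Σ_j Σ_{k<S_j} (tᵏ/k!)·exp(tB_j) y_{j,k}` is `n`-times differentiable, solves the
factored homogeneous equation, and its initial data are `Mₙ` applied to the coefficients. -/
theorem dAlembert_theorem1 {X : Type*} [NormedAddCommGroup X] [NormedSpace ℝ X]
    [CompleteSpace X] (i n : ℕ) (B : Fin i → X →L[ℝ] X)
    (hcomm : ∀ j l, B j ∘L B l = B l ∘L B j)
    (S : Fin i → ℕ) (hS : ∀ j, 1 ≤ S j) (hn : ∑ j, S j = n)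
    (y : Fin i → ℕ → X) (u : ℝ → X)
    (hu : ∀ t, u t = ∑ j, ∑ k ∈ Finset.range (S j),
        (t ^ k / (Nat.factorial k : ℝ)) • (NormedSpace.exp (t • B j)) (y j k)) :
    NTimesDifferentiable n u
      ∧ applyFactors B S u = (fun _ => 0)
      ∧ ∀ m < n, iteratedDeriv m u 0
          = ∑ j, ∑ k ∈ Finset.range (min (m + 1) (S j)),
              (Nat.choose m k : ℝ) • ((B j) ^ (m - k)) (y j k) := by
  classical
  set ybar : Fin i → ℕ → X := fun j k => if k < S j then y j k else 0 with hybar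
  have hSn : ∀ j, S j ≤ n := by
    intro j
    rw [← hn]
    exact Finset.single_le_sum (f := S) (fun l _ => Nat.zero_le _) (Finset.mem_univ j)
  have hsupp : ∀ j k, S j ≤ k → ybar j k = 0 := fun j k hk => if_neg (by omega)
  have hsuppN : ∀ j k, n ≤ k → ybar j k = 0 := fun j k hk => hsupp j k ((hSn j).trans hk)
  have hurep : u = GRep B n ybar := by
    funext t
    rw [hu t, GRep]
    refine Finset.sum_congr rfl fun j _ => ?_
    rw [comb]
    calc ∑ k ∈ Finset.range (S j),
          (t ^ k / (Nat.factorial k : ℝ)) • (NormedSpace.exp (t • B j)) (y j k)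
        = ∑ k ∈ Finset.range (S j),
          (t ^ k / (Nat.factorial k : ℝ)) • (NormedSpace.exp (t • B j)) (ybar j k) := by
          refine Finset.sum_congr rfl fun k hk => ?_
          rw [Finset.mem_range] at hk
          rw [hybar]
          simp only [if_pos hk]
      _ = ∑ k ∈ Finset.range n,
          (t ^ k / (Nat.factorial k : ℝ)) • (NormedSpace.exp (t • B j)) (ybar j k) := by
          refine Finset.sum_subset (Finset.range_subset_range.mpr (hSn j)) fun k _ hk => ?_
          rw [Finset.mem_range, not_lt] at hk
          rw [hsupp j k hk, map_zero, smul_zero]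
  have hrep : ∀ m, iteratedDeriv m u = GRep B n ((Dc B)^[m] ybar) := by
    rw [hurep]
    exact iteratedDeriv_GRep B n ybar hsuppN
  refine ⟨?_, ?_, ?_⟩
  · intro m _
    rw [hrep m]
    exact GRep_differentiable B n _
  · obtain ⟨c', κ', hs', hle', hkill', heq'⟩ :=
      applyFactors_GRep i B S B ybar S n (fun x j => hcomm x j) hsupp hSn
    have hz : ∀ x k, c' x k = 0 := fun x k => hs' x k (by have := hkill' x x rfl; omega)
    rw [hurep, heq']
    funext t
    rw [GRep]
    refine Finset.sum_eq_zero fun x _ => ?_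
    rw [comb]
    exact Finset.sum_eq_zero fun k _ => by rw [hz x k, map_zero, smul_zero]
  · intro m hm
    rw [hrep m, GRep_apply_zero B n _ (by omega)]
    refine Finset.sum_congr rfl fun j _ => ?_
    rw [Dc_iter_formula B ybar m j 0]
    have hsub : Finset.range (min (m + 1) (S j)) ⊆ Finset.range (m + 1) :=
      Finset.range_subset_range.mpr (min_le_left _ _)
    have hzero : ∀ r ∈ Finset.range (m + 1), r ∉ Finset.range (min (m + 1) (S j)) →
        (m.choose r : ℝ) • ((B j) ^ (m - r)) (ybar j (0 + r)) = 0 := by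
      intro r h1 h2
      rw [Finset.mem_range] at h1
      rw [Finset.mem_range, not_lt] at h2
      have hSr : S j ≤ r := by omega
      rw [zero_add, hsupp j r hSr, map_zero, smul_zero]
    rw [← Finset.sum_subset hsub hzero]
    refine Finset.sum_congr rfl fun r hr => ?_
    rw [Finset.mem_range, lt_min_iff] at hr
    rw [zero_add, hybar]
    simp only [if_pos hr.2]
end

section
/- Let X be a Banach space and let A₁,…,Aₙ be pairwise commuting bounded linear operators on X. If u : ℝ → X is n-times differentiable, satisfies (d/dt − Aₙ)∘⋯∘(d/dt − A₁)u = 0, and u^{(k)}(0) = 0 for k = 0, 1, …, n−1, then u(t) = 0 for all t. Consequently, two n-times differentiable solutions of the factored homogeneous equation with the same initial data u^{(k)}(0), k = 0,…,n−1, coincide. (The uniqueness assertion of Theorem 1 of the paper, in the bounded-generator case.) -/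
/-- The composite `(d/dt − Aₙ)∘⋯∘(d/dt − A₁)` applied to `u`
(`(d/dt − A₁)`, i.e. the factor of index `0`, is applied first). -/
noncomputable def factorChain {X : Type*} [NormedAddCommGroup X] [NormedSpace ℝ X]
    {n : ℕ} (A : Fin n → X →L[ℝ] X) (u : ℝ → X) : ℝ → X :=
  (List.ofFn fun j : Fin n => factorOp (A j)).foldl (fun v F => F v) u

open Set

section Aux
variable {X : Type*} [NormedAddCommGroup X] [NormedSpace ℝ X]

lemma iteratedDeriv_factorOp (A : X →L[ℝ] X) (u : ℝ → X) {n : ℕ}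
    (hu : NTimesDifferentiable (n+1) u) :
    ∀ m ≤ n, iteratedDeriv m (factorOp A u)
      = fun t => iteratedDeriv (m+1) u t - A (iteratedDeriv m u t) := by
  intro m
  induction m with
  | zero => intro _; funext t; simp [factorOp, iteratedDeriv_one]
  | succ m ih =>
    intro hm
    rw [iteratedDeriv_succ, ih (by omega)]
    funext t
    have hg : HasDerivAt (iteratedDeriv (m+1) u) (iteratedDeriv (m+2) u t) t := by
      rw [iteratedDeriv_succ (n := m+1)]
      exact ((hu (m+1) (by omega)) t).hasDerivAt
    have hh : HasDerivAt (iteratedDeriv m u) (iteratedDeriv (m+1) u t) t := by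
      rw [iteratedDeriv_succ (n := m)]
      exact ((hu m (by omega)) t).hasDerivAt
    have hAh : HasDerivAt (fun s => A (iteratedDeriv m u s)) (A (iteratedDeriv (m+1) u t)) t :=
      A.hasFDerivAt.comp_hasDerivAt t hh
    exact (hg.sub hAh).deriv

lemma NTD_factorOp (A : X →L[ℝ] X) (u : ℝ → X) {n : ℕ}
    (hu : NTimesDifferentiable (n+1) u) :
    NTimesDifferentiable n (factorOp A u) := by
  intro m hm
  rw [iteratedDeriv_factorOp A u hu m (by omega)]
  exact (hu (m+1) (by omega)).sub (A.differentiable.comp (hu m (by omega)))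

lemma factorChain_succ {n : ℕ} (A : Fin (n+1) → X →L[ℝ] X) (u : ℝ → X) :
    factorChain A u = factorChain (fun j : Fin n => A j.succ) (factorOp (A 0) u) := by
  simp [factorChain, List.ofFn_succ]

lemma chain_unique : ∀ (n : ℕ) (A : Fin n → X →L[ℝ] X) (u v : ℝ → X),
    NTimesDifferentiable n u → NTimesDifferentiable n v →
    factorChain A u = factorChain A v →
    (∀ k < n, iteratedDeriv k u 0 = iteratedDeriv k v 0) → ∀ t, u t = v t := by
  intro n
  induction n with
  | zero =>
    intro A u v _ _ hchain _ t
    simpa [factorChain] using congrFun hchain t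
  | succ n ih =>
    intro A u v hu hv hchain hinit t
    set w := factorOp (A 0) u with hw
    set z := factorOp (A 0) v with hz
    have hwz : ∀ s, w s = z s := by
      apply ih (fun j => A j.succ) w z (NTD_factorOp _ _ hu) (NTD_factorOp _ _ hv)
      · rw [← factorChain_succ, ← factorChain_succ, hchain]
      · intro k hk
        rw [hw, hz, iteratedDeriv_factorOp _ _ hu k (by omega),
          iteratedDeriv_factorOp _ _ hv k (by omega)]
        simp only
        rw [hinit (k+1) (by omega), hinit k (by omega)]
    -- now u' = A0 u + w, v' = A0 v + w, u 0 = v 0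
    have hud : Differentiable ℝ u := by simpa [iteratedDeriv_zero] using hu 0 (by omega)
    have hvd : Differentiable ℝ v := by simpa [iteratedDeriv_zero] using hv 0 (by omega)
    have h0 : u 0 = v 0 := by simpa [iteratedDeriv_zero] using hinit 0 (by omega)
    have key : EqOn u v (Icc (-(|t|+1)) (|t|+1)) := by
      apply ODE_solution_unique_of_mem_Icc (v := fun s x => A 0 x + w s)
        (s := fun _ => (univ : Set X)) (K := ‖A 0‖₊ + 1)
        (fun s _ => (((A 0).lipschitz.add (LipschitzWith.const' (K := 1) (w s))).lipschitzOnWith))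
        (t₀ := 0) (by constructor <;> [nlinarith [abs_nonneg t]; nlinarith [abs_nonneg t]])
        hud.continuous.continuousOn ?_ (fun _ _ => trivial)
        hvd.continuous.continuousOn ?_ (fun _ _ => trivial) h0
      · intro s _
        have h1 : HasDerivAt u (deriv u s) s := (hud s).hasDerivAt
        have : deriv u s = (fun s x => A 0 x + w s) s (u s) := by simp [hw, factorOp]
        rwa [this] at h1
      · intro s _
        have h1 : HasDerivAt v (deriv v s) s := (hvd s).hasDerivAt
        have : deriv v s = (fun s x => A 0 x + w s) s (v s) := by
          show deriv v s = A 0 (v s) + w s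
          rw [show w s = z s from hwz s]; simp [hz, factorOp]
        rwa [this] at h1
    exact key ⟨by nlinarith [abs_nonneg t, neg_abs_le t], by nlinarith [le_abs_self t]⟩

lemma iteratedDeriv_zero_fun' (m : ℕ) :
    iteratedDeriv m (fun _ : ℝ => (0 : X)) = fun _ => 0 := by
  induction m with
  | zero => simp
  | succ m ih => rw [iteratedDeriv_succ, ih]; funext t; simp

lemma NTD_zero (n : ℕ) : NTimesDifferentiable n (fun _ : ℝ => (0 : X)) := by
  intro m _
  rw [iteratedDeriv_zero_fun' m]; exact differentiable_const _

lemma factorChain_zero : ∀ (n : ℕ) (A : Fin n → X →L[ℝ] X),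
    factorChain A (fun _ : ℝ => (0 : X)) = fun _ => 0 := by
  intro n
  induction n with
  | zero => intro A; simp [factorChain]
  | succ n ih =>
    intro A
    rw [factorChain_succ]
    have : factorOp (A 0) (fun _ : ℝ => (0 : X)) = fun _ => 0 := by
      funext t; simp [factorOp]
    rw [this, ih]

lemma iteratedDeriv_zero_fun (m : ℕ) : iteratedDeriv m (fun _ : ℝ => (0 : X)) = fun _ => 0 := by
  induction m with
  | zero => simp
  | succ m ih => rw [iteratedDeriv_succ, ih]; funext t; simp

end Aux

/-- **Uniqueness in Theorem 1 of the paper, bounded-generator case:**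
an `n`-times differentiable solution of the factored homogeneous equation with zero initial
data vanishes identically; consequently two solutions with the same initial data coincide. -/
theorem dAlembert_theorem1_uniqueness {X : Type*} [NormedAddCommGroup X] [NormedSpace ℝ X]
    [CompleteSpace X] (n : ℕ) (A : Fin n → X →L[ℝ] X)
    (hcomm : ∀ j l, A j ∘L A l = A l ∘L A j) :
    (∀ u : ℝ → X, NTimesDifferentiable n u → factorChain A u = (fun _ => 0) →
        (∀ k < n, iteratedDeriv k u 0 = 0) → ∀ t, u t = 0)
      ∧ ∀ u v : ℝ → X, NTimesDifferentiable n u → NTimesDifferentiable n v →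
          factorChain A u = (fun _ => 0) → factorChain A v = (fun _ => 0) →
          (∀ k < n, iteratedDeriv k u 0 = iteratedDeriv k v 0) → ∀ t, u t = v t := by
  constructor
  · intro u hu hchain hinit t
    apply chain_unique n A u (fun _ => 0) hu (NTD_zero n)
      (by rw [hchain, factorChain_zero])
      (fun k hk => by rw [hinit k hk, iteratedDeriv_zero_fun]) t
  · intro u v hu hv hcu hcv hinit t
    exact chain_unique n A u v hu hv (by rw [hcu, hcv]) hinit t
end

section
/- Let X be a Banach space, let B₁,…,Bᵢ be pairwise commuting bounded linear operators on X such that B_j − B_l is bijective for all j ≠ l, and let S₁,…,Sᵢ ≥ 1 be integers with S₁ + ⋯ + Sᵢ = n. Then the linear map Φ from the product of n copies of X (indexed by pairs (j,k) with 1 ≤ j ≤ i, 0 ≤ k ≤ S_j−1) to Xⁿ defined by Φ((y_{j,k}))_m = Σ_{j=1}^{i} Σ_{k=0}^{min(m, S_j−1)} (m choose k)·B_j^{m−k} y_{j,k} for m = 0,…,n−1 is bijective. (The invertibility of the operator matrix Mₙ asserted in Theorem 1 of the paper, under the bounded-operator analogue of hypotheses (A1)′ and (A2)′.) -/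
open Polynomial Finset Matrix

section PolyLemmas
variable {A : Type*} [CommRing A]

/-- If `G` has unit constant coefficient, one can match any target `T` to order `S`. -/
lemma exists_mul_coeff_eq (G : A[X]) (hG : IsUnit (G.coeff 0)) (S : ℕ) (T : A[X]) :
    ∃ H : A[X], ∀ k < S, (G * H).coeff k = T.coeff k := by
  induction S with
  | zero => exact ⟨0, fun k hk => absurd hk (Nat.not_lt_zero k)⟩
  | succ s ih =>
    obtain ⟨H, hH⟩ := ih
    obtain ⟨u, hu⟩ := hG
    set c : A := ((u⁻¹ : Aˣ) : A) * (T.coeff s - (G * H).coeff s) with hc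
    refine ⟨H + C c * X ^ s, fun k hk => ?_⟩
    have expand : G * (H + C c * X ^ s) = G * H + (G * C c) * X ^ s := by ring
    have key : ∀ k : ℕ, (G * (H + C c * X ^ s)).coeff k
        = (G * H).coeff k + (if s ≤ k then G.coeff (k - s) * c else 0) := by
      intro k
      rw [expand, coeff_add, coeff_mul_X_pow']
      split_ifs with h
      · rw [coeff_mul_C]
      · rfl
    rcases Nat.lt_succ_iff_lt_or_eq.mp hk with h | h
    · rw [key, if_neg (by omega), add_zero, hH k h]
    · subst h
      rw [key, if_pos le_rfl, Nat.sub_self, ← hu, hc, ← mul_assoc,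
        Units.mul_inv, one_mul, add_sub_cancel]

/-- Taylor coefficients (below `S`) of a multiple of `(X - C r)^S` vanish. -/
lemma taylor_coeff_pow_mul_eq_zero (r : A) (S : ℕ) (q : A[X]) {k : ℕ} (hk : k < S) :
    (taylor r ((X - C r) ^ S * q)).coeff k = 0 := by
  have h1 : (X - C r).comp (X + C r) = X := by
    rw [sub_comp, X_comp, C_comp]; ring
  rw [taylor_apply, mul_comp, pow_comp, h1, mul_comm, coeff_mul_X_pow', if_neg (by omega)]

variable {i : ℕ} (b : Fin i → A) (S : Fin i → ℕ)

/-- Hermite interpolation: existence of a polynomial with prescribed jets. -/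
lemma hermite_exists (hu : ∀ j l, j ≠ l → IsUnit (b j - b l))
    (t : ((j : Fin i) × Fin (S j)) → A) :
    ∃ p : A[X], ∀ (j : Fin i) (k : Fin (S j)), (taylor (b j) p).coeff k = t ⟨j, k⟩ := by
  classical
  set g : Fin i → A[X] := fun j => ∏ l ∈ univ.erase j, (X - C (b l)) ^ S l with hg
  have hGunit : ∀ j, IsUnit ((taylor (b j) (g j)).coeff 0) := by
    intro j
    rw [taylor_coeff_zero, hg]
    simp only [eval_prod, eval_pow, eval_sub, eval_X, eval_C]
    refine Finset.prod_induction _ IsUnit (fun a b ha hb => ha.mul hb) isUnit_one ?_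
    intro l hl
    exact (hu j l (Ne.symm (Finset.mem_erase.mp hl).1)).pow _
  choose H hH using fun j => exists_mul_coeff_eq (taylor (b j) (g j)) (hGunit j) (S j)
    (∑ k : Fin (S j), monomial (k : ℕ) (t ⟨j, k⟩))
  refine ⟨∑ j, g j * taylor (-(b j)) (H j), fun j k => ?_⟩
  rw [map_sum, finset_sum_coeff]
  rw [Finset.sum_eq_single j]
  · rw [taylor_mul, taylor_taylor, add_neg_cancel, taylor_zero]
    rw [hH j k k.isLt]
    rw [finset_sum_coeff]
    rw [Finset.sum_eq_single k]
    · rw [coeff_monomial, if_pos rfl]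
    · intro l _ hl
      rw [coeff_monomial, if_neg (fun h => hl (Fin.ext h))]
    · intro h; exact absurd (mem_univ k) h
  · intro l _ hl
    have hmem : j ∈ univ.erase l := Finset.mem_erase.mpr ⟨Ne.symm hl, mem_univ j⟩
    have hgl : g l = (X - C (b j)) ^ S j *
        ∏ l' ∈ (univ.erase l).erase j, (X - C (b l')) ^ S l' := by
      rw [hg]
      exact (Finset.mul_prod_erase _ _ hmem).symm
    rw [hgl, mul_assoc]
    exact taylor_coeff_pow_mul_eq_zero _ _ _ k.isLt
  · intro h; exact absurd (mem_univ j) h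

end PolyLemmas

section MatrixLemmas
variable {A : Type*} [CommRing A] {i : ℕ} (b : Fin i → A) (S : Fin i → ℕ)

lemma taylor_coeff_eq_sum (r : A) (n : ℕ) (q : A[X]) (hq : q.natDegree < n) (k : ℕ) :
    (taylor r q).coeff k = ∑ m : Fin n, ((m : ℕ).choose k : A) * r ^ ((m : ℕ) - k) * q.coeff m := by
  conv_lhs => rw [q.as_sum_range' n hq]
  rw [map_sum, finset_sum_coeff, ← Finset.sum_range
    (fun m => ((m : ℕ).choose k : A) * r ^ ((m : ℕ) - k) * q.coeff m)]
  refine Finset.sum_congr rfl fun m _ => ?_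
  rw [taylor_monomial, coeff_C_mul, coeff_X_add_C_pow]
  ring

lemma hermite_vec (hu : ∀ j l, j ≠ l → IsUnit (b j - b l)) (n : ℕ) (hn : ∑ j, S j = n)
    (t : ((j : Fin i) × Fin (S j)) → A) :
    ∃ v : Fin n → A, ∀ (j : Fin i) (k : Fin (S j)),
      ∑ m : Fin n, ((m : ℕ).choose (k : ℕ) : A) * b j ^ ((m : ℕ) - (k : ℕ)) * v m = t ⟨j, k⟩ := by
  classical
  rcases subsingleton_or_nontrivial A with hA | hA
  · exact ⟨0, fun j k => Subsingleton.elim _ _⟩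
  obtain ⟨p, hp⟩ := hermite_exists b S hu t
  set f : A[X] := ∏ j, (X - C (b j)) ^ S j with hf
  have hfm : f.Monic := monic_prod_of_monic _ _ fun j _ => (monic_X_sub_C (b j)).pow (S j)
  have hfd : f.natDegree = n := by
    rw [hf, natDegree_prod_of_monic _ _ fun j _ => (monic_X_sub_C (b j)).pow (S j)]
    rw [← hn]
    exact Finset.sum_congr rfl fun j _ => by
      rw [(monic_X_sub_C (b j)).natDegree_pow, natDegree_X_sub_C, mul_one]
  set q : A[X] := p %ₘ f with hq
  have hjets : ∀ (j : Fin i) (k : Fin (S j)), (taylor (b j) q).coeff k = t ⟨j, k⟩ := by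
    intro j k
    have hmem : j ∈ (univ : Finset (Fin i)) := mem_univ j
    have hfj : f = (X - C (b j)) ^ S j * ∏ l ∈ univ.erase j, (X - C (b l)) ^ S l :=
      (Finset.mul_prod_erase _ _ hmem).symm
    rw [hq, modByMonic_eq_sub_mul_div _ f, map_sub, coeff_sub, hp j k, hfj, mul_assoc]
    rw [taylor_coeff_pow_mul_eq_zero _ _ _ k.isLt, sub_zero]
  have hqd : q.natDegree < n ∨ n = 0 := by
    by_cases h0 : n = 0
    · right; exact h0
    · left
      by_cases hq0 : q = 0
      · rw [hq0, natDegree_zero]; omega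
      · have := degree_modByMonic_lt p hfm
        rw [← hq] at this
        have hdeg : q.degree < (n : WithBot ℕ) := by
          rw [← hfd]
          exact lt_of_lt_of_le this (degree_le_natDegree)
        exact (natDegree_lt_iff_degree_lt hq0).mpr (by exact_mod_cast hdeg)
  rcases hqd with hqd | hn0
  · refine ⟨fun m => q.coeff m, fun j k => ?_⟩
    rw [← taylor_coeff_eq_sum _ n q hqd, hjets j k]
  · subst hn0
    have hS0 : ∀ j, S j = 0 := by
      intro j
      have := (Finset.sum_eq_zero_iff.mp hn) j (mem_univ j)
      exact this
    exact ⟨fun m => 0, fun j k => absurd k.isLt (by simp [hS0 j])⟩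

lemma matrix_invertible (hu : ∀ j l, j ≠ l → IsUnit (b j - b l)) (n : ℕ) (hn : ∑ j, S j = n)
    (e : ((j : Fin i) × Fin (S j)) ≃ Fin n) :
    ∃ N : Matrix (Fin n) (Fin n) A,
      (Matrix.of fun (m q : Fin n) => (((m : ℕ).choose ((e.symm q).2 : ℕ) : A) *
        b (e.symm q).1 ^ ((m : ℕ) - ((e.symm q).2 : ℕ)))) * N = 1 ∧
      N * (Matrix.of fun (m q : Fin n) => (((m : ℕ).choose ((e.symm q).2 : ℕ) : A) *
        b (e.symm q).1 ^ ((m : ℕ) - ((e.symm q).2 : ℕ)))) = 1 := by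
  classical
  set W : Matrix (Fin n) (Fin n) A := Matrix.of fun (m q : Fin n) =>
    (((m : ℕ).choose ((e.symm q).2 : ℕ) : A) * b (e.symm q).1 ^ ((m : ℕ) - ((e.symm q).2 : ℕ)))
    with hW
  choose v hv using fun q0 : Fin n =>
    hermite_vec b S hu n hn (fun σ => if e σ = q0 then (1 : A) else 0)
  set N : Matrix (Fin n) (Fin n) A := Matrix.of fun (m q0 : Fin n) => v q0 m with hN
  have h1 : Wᵀ * N = 1 := by
    ext q q0
    rw [Matrix.mul_apply, Matrix.one_apply]
    have := hv q0 (e.symm q).1 (e.symm q).2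
    simp only [Sigma.eta, Equiv.apply_symm_apply] at this
    simpa [W, N] using this
  have h2 : N * Wᵀ = 1 := mul_eq_one_comm.mp h1
  refine ⟨Nᵀ, ?_, ?_⟩
  · have := congrArg Matrix.transpose h2
    rwa [Matrix.transpose_mul, Matrix.transpose_transpose, Matrix.transpose_one] at this
  · have := congrArg Matrix.transpose h1
    rwa [Matrix.transpose_mul, Matrix.transpose_transpose, Matrix.transpose_one] at this

end MatrixLemmas

section Transfer

variable {X : Type*} [NormedAddCommGroup X] [NormedSpace ℝ X]

lemma natCast_clm_apply (c : ℕ) (x : X) : ((c : X →L[ℝ] X)) x = (c : ℝ) • x := by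
  simp [Nat.cast_smul_eq_nsmul]

lemma sum_matmul_apply {n : ℕ} {A' : Type*} [Ring A'] (φ : A' →+* (X →L[ℝ] X))
    (P Q : Matrix (Fin n) (Fin n) A') (a : Fin n) (w : Fin n → X) :
    ∑ q, φ (P a q) (∑ q', φ (Q q q') (w q')) = ∑ q', φ ((P * Q) a q') (w q') := by
  have h1 : ∀ q, φ (P a q) (∑ q', φ (Q q q') (w q')) = ∑ q', φ (P a q * Q q q') (w q') := by
    intro q
    rw [map_sum]
    exact Finset.sum_congr rfl fun q' _ => by rw [_root_.map_mul, ContinuousLinearMap.mul_apply]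
  rw [Finset.sum_congr rfl fun q _ => h1 q, Finset.sum_comm]
  refine Finset.sum_congr rfl fun q' _ => ?_
  rw [Matrix.mul_apply, map_sum, ContinuousLinearMap.sum_apply]

lemma sum_one_apply {n : ℕ} {A' : Type*} [Ring A'] (φ : A' →+* (X →L[ℝ] X))
    (a : Fin n) (w : Fin n → X) :
    ∑ q', φ ((1 : Matrix (Fin n) (Fin n) A') a q') (w q') = w a := by
  have h1 : ∀ q', φ ((1 : Matrix (Fin n) (Fin n) A') a q') (w q') = if a = q' then w q' else 0 := by
    intro q'
    rw [Matrix.one_apply]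
    split_ifs <;> simp
  rw [Finset.sum_congr rfl fun q' _ => h1 q', Finset.sum_ite_eq]
  simp

end Transfer

/-- **Invertibility of the operator matrix `Mₙ` (Theorem 1 of the paper)** under the
bounded-operator analogue of hypotheses (A1)′ and (A2)′: if the `B_j` pairwise commute and
`B_j − B_l` is bijective for `j ≠ l`, then the block operator map `Φ = Mₙ` sending the
coefficient vector `(y_{j,k})` to the initial-data vector is bijective. -/
theorem Mn_bijective {X : Type*} [NormedAddCommGroup X] [NormedSpace ℝ X]
    [CompleteSpace X] (i n : ℕ) (B : Fin i → X →L[ℝ] X)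
    (hcomm : ∀ j l, B j ∘L B l = B l ∘L B j)
    (hbij : ∀ j l, j ≠ l → Function.Bijective (B j - B l))
    (S : Fin i → ℕ) (hS : ∀ j, 1 ≤ S j) (hn : ∑ j, S j = n) :
    Function.Bijective (fun (y : ((j : Fin i) × Fin (S j)) → X) =>
      fun m : Fin n =>
        ∑ j : Fin i, ∑ k : Fin (S j),
          if (k : ℕ) ≤ (m : ℕ) then
            (Nat.choose (m : ℕ) (k : ℕ) : ℝ) • ((B j) ^ ((m : ℕ) - (k : ℕ))) (y ⟨j, k⟩)
          else 0) := by
  classical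
  have hcomm' : ∀ j l, B j * B l = B l * B j := fun j l => by
    rw [ContinuousLinearMap.mul_def, ContinuousLinearMap.mul_def]; exact hcomm j l
  set C1 : Subring (X →L[ℝ] X) := Subring.centralizer (Set.range B) with hC1
  set Asub : Subring (X →L[ℝ] X) :=
    Subring.centralizer ((C1 : Subring (X →L[ℝ] X)) : Set (X →L[ℝ] X)) with hAsub
  have hBC1 : ∀ j, B j ∈ C1 := by
    intro j
    rw [hC1, Subring.mem_centralizer_iff]
    rintro g ⟨l, rfl⟩
    exact hcomm' l j
  have hmemA : ∀ x : X →L[ℝ] X, (∀ g ∈ C1, g * x = x * g) → x ∈ Asub := by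
    intro x hx
    rw [hAsub, Subring.mem_centralizer_iff]
    exact fun g hg => hx g hg
  have hA_C1 : ∀ x : X →L[ℝ] X, x ∈ Asub → ∀ g ∈ C1, g * x = x * g := by
    intro x hx
    rw [hAsub, Subring.mem_centralizer_iff] at hx
    exact fun g hg => hx g hg
  have hBA : ∀ j, B j ∈ Asub := fun j =>
    hmemA _ (fun g hg => (Subring.mem_centralizer_iff.mp hg (B j) ⟨j, rfl⟩).symm)
  letI instCommA : CommRing Asub :=
    { (inferInstance : Ring Asub) with
      mul_comm := fun x y => by
        have hyC1 : (y : X →L[ℝ] X) ∈ C1 := by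
          rw [hC1, Subring.mem_centralizer_iff]
          rintro g ⟨l, rfl⟩
          exact hA_C1 y.1 y.2 (B l) (hBC1 l)
        exact Subtype.ext ((hA_C1 x.1 x.2 y.1 hyC1).symm) }
  set bj : Fin i → Asub := fun j => ⟨B j, hBA j⟩ with hbj
  -- the differences are units of `Asub`
  have hunits : ∀ j l, j ≠ l → IsUnit (bj j - bj l) := by
    intro j l hjl
    set u : X →L[ℝ] X := B j - B l with hu
    let E : X ≃L[ℝ] X := ContinuousLinearEquiv.ofBijective u
      (LinearMap.ker_eq_bot |>.mpr (hbij j l hjl).1)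
      (LinearMap.range_eq_top.mpr (hbij j l hjl).2)
    set v : X →L[ℝ] X := (E.symm : X →L[ℝ] X) with hv
    have huv : u * v = 1 := by
      ext x; simpa [v, E, ContinuousLinearMap.mul_apply] using E.apply_symm_apply x
    have hvu : v * u = 1 := by
      ext x; simpa [v, E, ContinuousLinearMap.mul_apply] using E.symm_apply_apply x
    have hvA : v ∈ Asub := by
      refine hmemA _ (fun g hg => ?_)
      have h1 := Subring.mem_centralizer_iff.mp hg
      have hgu : g * u = u * g := by
        have hj := h1 (B j) ⟨j, rfl⟩
        have hl := h1 (B l) ⟨l, rfl⟩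
        rw [hu, mul_sub, sub_mul, hj, hl]
      calc g * v = (v * u) * (g * v) := by rw [hvu, one_mul]
        _ = v * ((u * g) * v) := by simp only [mul_assoc]
        _ = v * ((g * u) * v) := by rw [hgu]
        _ = (v * g) * (u * v) := by simp only [mul_assoc]
        _ = v * g := by rw [huv, mul_one]
    refine isUnit_iff_exists.mpr ⟨⟨v, hvA⟩, ?_, ?_⟩
    · exact Subtype.ext huv
    · exact Subtype.ext hvu
  -- the index equivalence
  have hcard : Fintype.card ((j : Fin i) × Fin (S j)) = n := by
    simp [Fintype.card_sigma, hn]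
  set e : ((j : Fin i) × Fin (S j)) ≃ Fin n := Fintype.equivFinOfCardEq hcard with he
  obtain ⟨N, hWN, hNW⟩ := matrix_invertible bj S hunits n hn e
  set W : Matrix (Fin n) (Fin n) Asub := Matrix.of fun (m q : Fin n) =>
    (((m : ℕ).choose ((e.symm q).2 : ℕ) : Asub) *
      bj (e.symm q).1 ^ ((m : ℕ) - ((e.symm q).2 : ℕ))) with hW
  set φ : Asub →+* (X →L[ℝ] X) := Asub.subtype with hφ
  -- the entries act as stated
  have hterm : ∀ (m : Fin n) (j : Fin i) (k : Fin (S j)) (x : X),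
      φ (((m : ℕ).choose (k : ℕ) : Asub) * bj j ^ ((m : ℕ) - (k : ℕ))) x
        = (if (k : ℕ) ≤ (m : ℕ) then
            ((m : ℕ).choose (k : ℕ) : ℝ) • ((B j) ^ ((m : ℕ) - (k : ℕ))) x else 0) := by
    intro m j k x
    have hval : φ (((m : ℕ).choose (k : ℕ) : Asub) * bj j ^ ((m : ℕ) - (k : ℕ)))
        = ((m : ℕ).choose (k : ℕ) : X →L[ℝ] X) * (B j) ^ ((m : ℕ) - (k : ℕ)) := by
      rw [_root_.map_mul, map_natCast, _root_.map_pow]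
      rfl
    rw [hval, ContinuousLinearMap.mul_apply, natCast_clm_apply]
    split_ifs with h
    · rfl
    · rw [Nat.choose_eq_zero_of_lt (by omega), Nat.cast_zero, zero_smul]
  -- rewrite the map in matrix form
  have hF : ∀ (y : ((j : Fin i) × Fin (S j)) → X) (m : Fin n),
      (∑ j : Fin i, ∑ k : Fin (S j),
        if (k : ℕ) ≤ (m : ℕ) then
          (Nat.choose (m : ℕ) (k : ℕ) : ℝ) • ((B j) ^ ((m : ℕ) - (k : ℕ))) (y ⟨j, k⟩)
        else 0)
      = ∑ q : Fin n, φ (W m q) (y (e.symm q)) := by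
    intro y m
    have step1 : ∑ σ : (j : Fin i) × Fin (S j), φ (W m (e σ)) (y σ)
        = ∑ q : Fin n, φ (W m q) (y (e.symm q)) := by
      refine Fintype.sum_equiv e _ _ fun σ => ?_
      rw [Equiv.symm_apply_apply]
    rw [← step1, ← Finset.univ_sigma_univ, Finset.sum_sigma]
    refine Finset.sum_congr rfl fun j _ => Finset.sum_congr rfl fun k _ => ?_
    have hentry : W m (e ⟨j, k⟩)
        = ((m : ℕ).choose (k : ℕ) : Asub) * bj j ^ ((m : ℕ) - (k : ℕ)) := by
      rw [hW, Matrix.of_apply, Equiv.symm_apply_apply]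
    rw [hentry, hterm m j k (y ⟨j, k⟩)]
  -- the inverse map
  set G : (Fin n → X) → ((j : Fin i) × Fin (S j)) → X :=
    fun v σ => ∑ q : Fin n, φ (N (e σ) q) (v q) with hG
  refine Function.bijective_iff_has_inverse.mpr ⟨G, ?_, ?_⟩
  · -- left inverse
    intro y
    funext σ
    beta_reduce
    have : G (fun m => ∑ j : Fin i, ∑ k : Fin (S j),
        if (k : ℕ) ≤ (m : ℕ) then
          (Nat.choose (m : ℕ) (k : ℕ) : ℝ) • ((B j) ^ ((m : ℕ) - (k : ℕ))) (y ⟨j, k⟩)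
        else 0) σ
        = ∑ q : Fin n, φ (N (e σ) q) (∑ q' : Fin n, φ (W q q') (y (e.symm q'))) := by
      rw [hG]
      exact Finset.sum_congr rfl fun q _ => congrArg _ (hF y q)
    rw [this, sum_matmul_apply φ N W (e σ) (fun q' => y (e.symm q')), hNW,
      sum_one_apply φ (e σ) (fun q' => y (e.symm q')), Equiv.symm_apply_apply]
  · -- right inverse
    intro v
    funext m
    beta_reduce
    rw [hF (G v) m]
    have : ∀ q : Fin n, G v (e.symm q) = ∑ q' : Fin n, φ (N q q') (v q') := by
      intro q
      rw [hG]
      simp [Equiv.apply_symm_apply]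
    rw [Finset.sum_congr rfl fun q _ => by rw [this q]]
    rw [sum_matmul_apply φ W N m v, hWN, sum_one_apply φ m v]
end

section
/- Let X be a Banach space, let A be a bounded linear operator on X, let n ≥ 1, and let f : ℝ → X be continuous. Then the function u(t) = ∫₀ᵗ ((t−s)^{n−1}/(n−1)!)·exp((t−s)A) f(s) ds is n-times differentiable on [0,∞), satisfies (d/dt − A)ⁿ u = f, and satisfies u^{(m)}(0) = 0 for m = 0, 1, …, n−1. (Formula (3.12) of the paper: the solution of the repeated-root inhomogeneous equation with zero initial data, in the bounded-generator case.) -/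
set_option linter.unusedSectionVars false
set_option maxHeartbeats 1000000
set_option synthInstance.maxHeartbeats 1000000

namespace RRAux

open NormedSpace intervalIntegral Finset MeasureTheory

variable {X : Type*} [NormedAddCommGroup X] [NormedSpace ℝ X] [CompleteSpace X]

noncomputable def Vfun (g : ℝ → X) (j : ℕ) (t : ℝ) : X :=
  ∫ s in (0:ℝ)..t, ((-s) ^ j) • g s

noncomputable def Wfun (g : ℝ → X) (k : ℕ) (t : ℝ) : X :=
  ∫ s in (0:ℝ)..t, ((t - s) ^ k / (Nat.factorial k : ℝ)) • g s

lemma V_hasDerivAt {g : ℝ → X} (hg : Continuous g) (j : ℕ) (t : ℝ) :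
    HasDerivAt (Vfun g j) (((-t) ^ j) • g t) t :=
  (Continuous.integral_hasStrictDerivAt (by fun_prop) 0 t).hasDerivAt

lemma scalar_expand (k : ℕ) (t s : ℝ) :
    (t - s) ^ k / (Nat.factorial k : ℝ) =
      ∑ j ∈ Finset.range (k+1),
        ((k.choose j : ℝ) / (Nat.factorial k : ℝ) * t ^ (k - j)) * (-s) ^ j := by
  have h : t - s = -s + t := by ring
  rw [h, add_pow, Finset.sum_div]
  exact Finset.sum_congr rfl fun j hj => by ring

lemma W_eq_sum {g : ℝ → X} (hg : Continuous g) (k : ℕ) (t : ℝ) :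
    Wfun g k t = ∑ j ∈ Finset.range (k+1),
      ((k.choose j : ℝ) / (Nat.factorial k : ℝ) * t ^ (k - j)) • Vfun g j t := by
  unfold Wfun Vfun
  rw [intervalIntegral.integral_congr (g := fun s => ∑ j ∈ Finset.range (k+1),
      ((k.choose j : ℝ) / (Nat.factorial k : ℝ) * t ^ (k - j)) • (((-s) ^ j) • g s))
    (fun s _ => by simp only [smul_smul, ← Finset.sum_smul]; rw [scalar_expand k t s]),
    intervalIntegral.integral_finset_sum]
  · exact Finset.sum_congr rfl fun j _ => intervalIntegral.integral_smul _ _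
  · intro j _
    exact ((continuous_const.smul
      ((by fun_prop : Continuous fun s : ℝ => (-s)^j).smul hg)).intervalIntegrable _ _)

lemma coeff_key (k j : ℕ) (hj : j ≤ k) :
    ((k+1).choose j : ℝ) / (Nat.factorial (k+1) : ℝ) * ((k + 1 - j : ℕ) : ℝ) =
      (k.choose j : ℝ) / (Nat.factorial k : ℝ) := by
  have h := Nat.choose_mul_succ_eq k j
  have h2 : ((k.choose j : ℝ)) * (k+1) = ((k+1).choose j : ℝ) * ((k+1-j : ℕ) : ℝ) := by
    exact_mod_cast congrArg (Nat.cast : ℕ → ℝ) h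
  rw [div_mul_eq_mul_div, ← h2, Nat.factorial_succ]
  push_cast
  rw [mul_comm ((k.choose j : ℝ)) ((k:ℝ)+1), mul_div_mul_left _ _ (by positivity)]

lemma W0_hasDerivAt {g : ℝ → X} (hg : Continuous g) (t : ℝ) :
    HasDerivAt (Wfun g 0) (g t) t := by
  have : Wfun g 0 = fun t => ∫ s in (0:ℝ)..t, g s := by
    funext t
    exact intervalIntegral.integral_congr fun s _ => by simp
  rw [this]
  exact (Continuous.integral_hasStrictDerivAt hg 0 t).hasDerivAt

lemma W_hasDerivAt {g : ℝ → X} (hg : Continuous g) (k : ℕ) (t : ℝ) :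
    HasDerivAt (Wfun g (k+1)) (Wfun g k t) t := by
  have hterm : ∀ j ∈ Finset.range (k+2), HasDerivAt
      (fun t : ℝ => (((k+1).choose j : ℝ) / (Nat.factorial (k+1) : ℝ) * t ^ (k + 1 - j)) • Vfun g j t)
      ((((k+1).choose j : ℝ) / (Nat.factorial (k+1) : ℝ) * t ^ (k + 1 - j)) • (((-t) ^ j) • g t)
        + (((k+1).choose j : ℝ) / (Nat.factorial (k+1) : ℝ)
            * (((k+1-j : ℕ) : ℝ) * t ^ (k + 1 - j - 1))) • Vfun g j t) t := by
    intro j _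
    exact HasDerivAt.smul ((hasDerivAt_pow (k+1-j) t).const_mul _) (V_hasDerivAt hg j t)
  have hsum := HasDerivAt.fun_sum hterm
  have heq : (fun t : ℝ => ∑ j ∈ Finset.range (k+2),
      (((k+1).choose j : ℝ) / (Nat.factorial (k+1) : ℝ) * t ^ (k + 1 - j)) • Vfun g j t)
      = Wfun g (k+1) := by
    funext t; exact (W_eq_sum hg (k+1) t).symm
  rw [heq] at hsum
  convert hsum using 1
  have hzero : ∑ j ∈ Finset.range (k+2),
      (((k+1).choose j : ℝ) / (Nat.factorial (k+1) : ℝ) * t ^ (k + 1 - j)) • (((-t) ^ j) • g t)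
        = 0 := by
    simp only [smul_smul, ← Finset.sum_smul]
    rw [← scalar_expand (k+1) t t]
    simp
  have hlast : (((k+1).choose (k+1) : ℝ) / (Nat.factorial (k+1) : ℝ)
      * (((k+1-(k+1) : ℕ) : ℝ) * t ^ (k + 1 - (k+1) - 1))) • Vfun g (k+1) t = 0 := by
    simp
  rw [Finset.sum_add_distrib, hzero, zero_add, Finset.sum_range_succ, hlast, add_zero,
    W_eq_sum hg k t]
  refine Finset.sum_congr rfl fun j hj => ?_
  have hj' : j ≤ k := Nat.lt_succ_iff.1 (Finset.mem_range.1 hj)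
  congr 1
  have : k + 1 - j - 1 = k - j := by omega
  rw [this, ← mul_assoc, coeff_key k j hj']

noncomputable def gfun (A : X →L[ℝ] X) (f : ℝ → X) (s : ℝ) : X :=
  (exp ((-s) • A)) (f s)

noncomputable def Ufun (A : X →L[ℝ] X) (f : ℝ → X) (k : ℕ) (t : ℝ) : X :=
  (exp (t • A)) (Wfun (gfun A f) k t)

lemma exp_hasDerivAt (A : X →L[ℝ] X) (t : ℝ) :
    HasDerivAt (fun t : ℝ => exp (t • A)) (A * exp (t • A)) t :=
  hasDerivAt_exp_smul_const' A t

lemma exp_cont (A : X →L[ℝ] X) : Continuous (fun t : ℝ => exp (t • A)) :=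
  Differentiable.continuous fun t => (exp_hasDerivAt A t).differentiableAt

lemma gfun_cont (A : X →L[ℝ] X) {f : ℝ → X} (hf : Continuous f) : Continuous (gfun A f) :=
  Continuous.clm_apply ((exp_cont A).comp continuous_neg) hf

lemma exp_neg_cancel (A : X →L[ℝ] X) (t : ℝ) (x : X) :
    (exp (t • A)) ((exp ((-t) • A)) x) = x := by
  rw [← ContinuousLinearMap.mul_apply, ← NormedSpace.exp_add_of_commute_of_mem_ball (𝕂 := ℝ)
    (((Commute.refl A).smul_left t).smul_right (-t)) ((NormedSpace.expSeries_radius_eq_top ℝ (X →L[ℝ] X)).symm ▸ edist_lt_top _ _) ((NormedSpace.expSeries_radius_eq_top ℝ (X →L[ℝ] X)).symm ▸ edist_lt_top _ _)]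
  have h : t • A + (-t) • A = 0 := by module
  rw [h, NormedSpace.exp_zero, ContinuousLinearMap.one_apply]

lemma exp_smul_add (A : X →L[ℝ] X) (t s : ℝ) (x : X) :
    (exp (t • A)) ((exp (s • A)) x) = (exp ((t + s) • A)) x := by
  rw [← ContinuousLinearMap.mul_apply, ← NormedSpace.exp_add_of_commute_of_mem_ball (𝕂 := ℝ)
    (((Commute.refl A).smul_left t).smul_right s) ((NormedSpace.expSeries_radius_eq_top ℝ (X →L[ℝ] X)).symm ▸ edist_lt_top _ _) ((NormedSpace.expSeries_radius_eq_top ℝ (X →L[ℝ] X)).symm ▸ edist_lt_top _ _), add_smul]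

lemma U_zero (A : X →L[ℝ] X) (f : ℝ → X) (k : ℕ) : Ufun A f k 0 = 0 := by
  unfold Ufun Wfun
  rw [intervalIntegral.integral_same, map_zero]

lemma U_eq (A : X →L[ℝ] X) {f : ℝ → X} (hf : Continuous f) (k : ℕ) (t : ℝ) :
    Ufun A f k t = ∫ s in (0:ℝ)..t,
      ((t - s) ^ k / (Nat.factorial k : ℝ)) • (exp ((t - s) • A)) (f s) := by
  unfold Ufun Wfun
  rw [← ContinuousLinearMap.intervalIntegral_comp_comm _
    ((show Continuous fun s => ((t - s) ^ k / (Nat.factorial k : ℝ)) • gfun A f s from Continuous.smul (by fun_prop) (gfun_cont A hf)).intervalIntegrable _ _)]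
  refine intervalIntegral.integral_congr fun s _ => ?_
  rw [ContinuousLinearMap.map_smul]
  congr 1
  unfold gfun
  rw [exp_smul_add]
  congr 2

lemma U_hasDerivAt_succ (A : X →L[ℝ] X) {f : ℝ → X} (hf : Continuous f) (k : ℕ) (t : ℝ) :
    HasDerivAt (Ufun A f (k+1)) (Ufun A f k t + A (Ufun A f (k+1) t)) t := by
  have h := (exp_hasDerivAt A t).clm_apply (W_hasDerivAt (gfun_cont A hf) k t)
  simp only [ContinuousLinearMap.mul_apply] at h
  unfold Ufun
  rw [show (fun t => (exp (t • A)) (Wfun (gfun A f) k t)) t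
        + A ((exp (t • A)) (Wfun (gfun A f) (k+1) t))
      = A ((exp (t • A)) (Wfun (gfun A f) (k+1) t))
        + (exp (t • A)) (Wfun (gfun A f) k t) from add_comm _ _]
  exact h

lemma U_hasDerivAt_zero (A : X →L[ℝ] X) {f : ℝ → X} (hf : Continuous f) (t : ℝ) :
    HasDerivAt (Ufun A f 0) (f t + A (Ufun A f 0 t)) t := by
  have h := (exp_hasDerivAt A t).clm_apply (W0_hasDerivAt (gfun_cont A hf) t)
  simp only [ContinuousLinearMap.mul_apply] at h
  unfold Ufun
  unfold gfun at h
  rw [exp_neg_cancel] at h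
  rw [show f t + A ((exp (t • A)) (Wfun (gfun A f) 0 t))
      = A ((exp (t • A)) (Wfun (gfun A f) 0 t)) + f t from add_comm _ _]
  exact h

lemma U_diff (A : X →L[ℝ] X) {f : ℝ → X} (hf : Continuous f) (k : ℕ) :
    Differentiable ℝ (Ufun A f k) := by
  cases k with
  | zero => exact fun t => (U_hasDerivAt_zero A hf t).differentiableAt
  | succ k => exact fun t => (U_hasDerivAt_succ A hf k t).differentiableAt

lemma pascal_sum (m : ℕ) (T : ℕ → X) :
    ∑ i ∈ Finset.range (m+1), (m.choose i : ℝ) • T i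
      + ∑ i ∈ Finset.range (m+1), (m.choose i : ℝ) • T (i+1)
      = ∑ i ∈ Finset.range (m+2), ((m+1).choose i : ℝ) • T i := by
  rw [Finset.sum_range_succ' (fun i => (((m+1).choose i : ℝ)) • T i) (m+1)]
  simp only [Nat.choose_succ_succ, Nat.cast_add, add_smul, Finset.sum_add_distrib,
    Nat.choose_zero_right, Nat.cast_one, one_smul]
  rw [Finset.sum_range_succ' (fun i => ((m.choose i : ℝ)) • T i) m]
  rw [Finset.sum_range_succ (fun i => ((m.choose (i+1) : ℝ)) • T (i+1)) m]
  simp [Nat.choose_succ_self]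
  abel

lemma iter_formula (A : X →L[ℝ] X) {f : ℝ → X} (hf : Continuous f) :
    ∀ m k : ℕ, m ≤ k → iteratedDeriv m (Ufun A f k)
      = fun t => ∑ i ∈ Finset.range (m+1),
          ((m.choose i : ℝ)) • (A^i) (Ufun A f (k-m+i) t) := by
  intro m
  induction m with
  | zero => intro k _; funext t; simp
  | succ m IH =>
    intro k hm
    rw [iteratedDeriv_succ, IH k (le_trans (Nat.le_succ m) hm)]
    funext t
    have hidx : ∀ i : ℕ, k - m + i = k - (m+1) + i + 1 := fun i => by omega
    set T : ℕ → X := fun i => (A^i) (Ufun A f (k-(m+1)+i) t) with hT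
    have hterm : ∀ i ∈ Finset.range (m+1), HasDerivAt
        (fun t => ((m.choose i : ℝ)) • (A^i) (Ufun A f (k-(m+1)+i+1) t))
        (((m.choose i : ℝ)) • ((A^i) (Ufun A f (k-(m+1)+i) t
          + A (Ufun A f (k-(m+1)+i+1) t)))) t := by
      intro i _
      exact (((A^i).hasFDerivAt.comp_hasDerivAt t
        (U_hasDerivAt_succ A hf (k-(m+1)+i) t))).const_smul _
    have hds := (HasDerivAt.fun_sum hterm).deriv
    simp only [hidx]
    rw [hds]
    calc ∑ i ∈ Finset.range (m+1),
          ((m.choose i : ℝ)) • ((A^i) (Ufun A f (k-(m+1)+i) t + A (Ufun A f (k-(m+1)+i+1) t)))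
        = ∑ i ∈ Finset.range (m+1), ((m.choose i : ℝ) • T i + (m.choose i : ℝ) • T (i+1)) := by
          refine Finset.sum_congr rfl fun i _ => ?_
          rw [map_add, smul_add, hT]
          simp only [pow_succ, ContinuousLinearMap.mul_apply, ← add_assoc]
      _ = ∑ i ∈ Finset.range (m+2), (((m+1).choose i : ℝ)) • T i := by
          rw [Finset.sum_add_distrib]; exact pascal_sum m T

lemma factor_succ (A : X →L[ℝ] X) {f : ℝ → X} (hf : Continuous f) (k : ℕ) :
    factorOp A (Ufun A f (k+1)) = Ufun A f k := by
  funext t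
  unfold factorOp
  rw [(U_hasDerivAt_succ A hf k t).deriv]
  abel

lemma factor_zero (A : X →L[ℝ] X) {f : ℝ → X} (hf : Continuous f) :
    factorOp A (Ufun A f 0) = f := by
  funext t
  unfold factorOp
  rw [(U_hasDerivAt_zero A hf t).deriv]
  abel

lemma factor_iter (A : X →L[ℝ] X) {f : ℝ → X} (hf : Continuous f) :
    ∀ k : ℕ, (factorOp A)^[k+1] (Ufun A f k) = f := by
  intro k
  induction k with
  | zero => exact factor_zero A hf
  | succ k IH =>
    rw [Function.iterate_succ_apply, factor_succ A hf k, IH]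

end RRAux

/-- **Formula (3.12) of the paper, bounded-generator case:**
`u(t) = ∫₀ᵗ ((t−s)^{n−1}/(n−1)!)·exp((t−s)A) f(s) ds` is `n`-times differentiable, solves
`(d/dt − A)ⁿ u = f`, and has zero initial data `u^{(m)}(0) = 0`, `m = 0,…,n−1`. -/
theorem repeated_root_inhomogeneous {X : Type*} [NormedAddCommGroup X] [NormedSpace ℝ X]
    [CompleteSpace X] (A : X →L[ℝ] X) (n : ℕ) (hn : 1 ≤ n)
    (f : ℝ → X) (hf : Continuous f) (u : ℝ → X)
    (hu : ∀ t, u t = ∫ s in (0:ℝ)..t,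
        ((t - s) ^ (n - 1) / (Nat.factorial (n - 1) : ℝ)) •
          (NormedSpace.exp ((t - s) • A)) (f s)) :
    NTimesDifferentiable n u
      ∧ (factorOp A)^[n] u = f
      ∧ ∀ m < n, iteratedDeriv m u 0 = 0 := by
  obtain ⟨k, rfl⟩ : ∃ k, n = k + 1 := ⟨n - 1, (Nat.succ_pred_eq_of_pos hn).symm⟩
  simp only [Nat.add_sub_cancel] at hu
  have hueq : u = RRAux.Ufun A f k := funext fun t => (hu t).trans (RRAux.U_eq A hf k t).symm
  subst hueq
  refine ⟨?_, RRAux.factor_iter A hf k, ?_⟩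
  · intro m hm
    rw [RRAux.iter_formula A hf m k (Nat.lt_succ_iff.1 hm)]
    exact Differentiable.fun_sum fun i _ =>
      (((A^i).differentiable).comp (RRAux.U_diff A hf _)).const_smul _
  · intro m hm
    rw [RRAux.iter_formula A hf m k (Nat.lt_succ_iff.1 hm)]
    simp [RRAux.U_zero]
end

section
/- Let z₁ ∈ ℝ, let φ₁ : ℝ → ℝ be three times continuously differentiable, let φ₂ : ℝ → ℝ be twice continuously differentiable, and let f : ℝ × ℝ → ℝ be continuously differentiable with continuous second partial derivative in the second (space) variable. Define u : ℝ × ℝ → ℝ by u(t,x) = φ₁(x + z₁t) + t·φ₂(x + z₁t) − z₁·t·φ₁'(x + z₁t) + ∫₀ᵗ (t−s)·f(s, x + z₁(t−s)) ds. Then u satisfies the partial differential equation ∂²u/∂t² − 2z₁·∂²u/∂t∂x + z₁²·∂²u/∂x² = f(t,x) for all (t,x), together with the initial conditions u(0,x) = φ₁(x) and (∂u/∂t)(0,x) = φ₂(x) for all x ∈ ℝ. (Example 1 of the paper: the explicit solution of u_tt + a₁u_tx + a₂u_xx = f when the characteristic polynomial z² + a₁z + a₂ has the double root z₁, i.e.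 a₁ = −2z₁ and a₂ = z₁².) -/
open MeasureTheory intervalIntegral


private lemma abs_sub_le_of_uIoc {a b s : ℝ} (hs : s ∈ Set.uIoc a b) : |s - a| ≤ |b - a| := by
  rcases Set.mem_uIoc.1 hs with ⟨h1, h2⟩ | ⟨h1, h2⟩
  · rw [abs_sub_le_iff, abs_of_pos (by linarith : (0:ℝ) < b - a)]
    constructor <;> linarith
  · rw [abs_sub_le_iff, abs_of_neg (by linarith : b - a < 0)]
    constructor <;> linarith

private lemma keyF {h h1 : ℝ → ℝ → ℝ}
    (hc : Continuous (Function.uncurry h))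
    (hc1 : Continuous (Function.uncurry h1))
    (hd : ∀ s y, HasDerivAt (h s) (h1 s y) y)
    (t₀ y₀ : ℝ) :
    HasFDerivAt (fun p : ℝ × ℝ => ∫ s in (0:ℝ)..p.1, h s p.2)
      ((h t₀ y₀) • (ContinuousLinearMap.fst ℝ ℝ ℝ)
        + (∫ s in (0:ℝ)..t₀, h1 s y₀) • (ContinuousLinearMap.snd ℝ ℝ ℝ))
      ((t₀, y₀) : ℝ × ℝ) := by
  have hcy : ∀ y : ℝ, Continuous fun s => h s y := fun y =>
    hc.comp (continuous_id.prodMk continuous_const)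
  have hcy1 : ∀ y : ℝ, Continuous fun s => h1 s y := fun y =>
    hc1.comp (continuous_id.prodMk continuous_const)
  have hxc1 : ∀ s : ℝ, Continuous fun y => h1 s y := fun s =>
    hc1.comp (continuous_const.prodMk continuous_id)
  rw [hasFDerivAt_iff_isLittleO_nhds_zero, Asymptotics.isLittleO_iff]
  intro c hcpos
  obtain ⟨δ₁, hδ₁pos, Hδ₁⟩ := Metric.continuousAt_iff.1 hc.continuousAt (c / 2) (by positivity)
  have hcomp : IsCompact ((Set.uIcc (0:ℝ) t₀) ×ˢ (Set.Icc (y₀ - 1) (y₀ + 1))) :=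
    isCompact_uIcc.prod isCompact_Icc
  obtain ⟨δ₂, hδ₂pos, Hδ₂⟩ := Metric.uniformContinuousOn_iff.1
    (hcomp.uniformContinuousOn_of_continuous hc1.continuousOn)
    (c / (2 * (|t₀| + 1))) (by positivity)
  have hδpos : (0:ℝ) < min 1 (min δ₁ δ₂) := lt_min one_pos (lt_min hδ₁pos hδ₂pos)
  filter_upwards [Metric.ball_mem_nhds (0 : ℝ × ℝ) hδpos] with q hq
  obtain ⟨τ, η⟩ := q
  rw [mem_ball_zero_iff] at hq
  have hτle : |τ| ≤ ‖((τ, η) : ℝ × ℝ)‖ := by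
    simpa [Real.norm_eq_abs] using norm_fst_le ((τ, η) : ℝ × ℝ)
  have hηle : |η| ≤ ‖((τ, η) : ℝ × ℝ)‖ := by
    simpa [Real.norm_eq_abs] using norm_snd_le ((τ, η) : ℝ × ℝ)
  have hτδ : |τ| < min 1 (min δ₁ δ₂) := lt_of_le_of_lt hτle hq
  have hηδ : |η| < min 1 (min δ₁ δ₂) := lt_of_le_of_lt hηle hq
  have hτ1 : |τ| < 1 := lt_of_lt_of_le hτδ (min_le_left _ _)
  have hτδ₁ : |τ| < δ₁ := lt_of_lt_of_le hτδ (le_trans (min_le_right _ _) (min_le_left _ _))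
  have hτδ₂ : |τ| < δ₂ := lt_of_lt_of_le hτδ (le_trans (min_le_right _ _) (min_le_right _ _))
  have hη1 : |η| < 1 := lt_of_lt_of_le hηδ (min_le_left _ _)
  have hηδ₁ : |η| < δ₁ := lt_of_lt_of_le hηδ (le_trans (min_le_right _ _) (min_le_left _ _))
  have hηδ₂ : |η| < δ₂ := lt_of_lt_of_le hηδ (le_trans (min_le_right _ _) (min_le_right _ _))
  set y' := y₀ + η with hy'
  -- decomposition identity
  have hadj : (∫ s in (0:ℝ)..t₀, h s y') + (∫ s in t₀..(t₀+τ), h s y')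
      = ∫ s in (0:ℝ)..(t₀+τ), h s y' :=
    integral_add_adjacent_intervals ((hcy y').intervalIntegrable _ _)
      ((hcy y').intervalIntegrable _ _)
  have hA : (∫ s in t₀..(t₀+τ), (h s y' - h t₀ y₀))
      = (∫ s in t₀..(t₀+τ), h s y') - h t₀ y₀ * τ := by
    rw [intervalIntegral.integral_sub ((hcy y').intervalIntegrable _ _) intervalIntegrable_const,
      intervalIntegral.integral_const, smul_eq_mul]
    ring
  have hB : (∫ s in (0:ℝ)..t₀, (h s y' - h s y₀ - h1 s y₀ * η))
      = (∫ s in (0:ℝ)..t₀, h s y') - (∫ s in (0:ℝ)..t₀, h s y₀)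
        - (∫ s in (0:ℝ)..t₀, h1 s y₀) * η := by
    rw [intervalIntegral.integral_sub (f := fun s => h s y' - h s y₀) (g := fun s => h1 s y₀ * η) (((hcy y').sub (hcy y₀)).intervalIntegrable _ _)
        (((hcy1 y₀).mul continuous_const).intervalIntegrable _ _),
      intervalIntegral.integral_sub ((hcy y').intervalIntegrable _ _) ((hcy y₀).intervalIntegrable _ _),
      intervalIntegral.integral_mul_const]
  have keyeq : (∫ s in (0:ℝ)..(t₀+τ), h s y') - (∫ s in (0:ℝ)..t₀, h s y₀)
      - (h t₀ y₀ * τ + (∫ s in (0:ℝ)..t₀, h1 s y₀) * η)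
      = (∫ s in t₀..(t₀+τ), (h s y' - h t₀ y₀))
        + ∫ s in (0:ℝ)..t₀, (h s y' - h s y₀ - h1 s y₀ * η) := by
    rw [hA, hB]; linarith [hadj]
  -- bound on A
  have boundA : ‖∫ s in t₀..(t₀+τ), (h s y' - h t₀ y₀)‖ ≤ (c/2) * |t₀ + τ - t₀| := by
    apply intervalIntegral.norm_integral_le_of_norm_le_const
    intro s hs
    have h1s : |s - t₀| ≤ |τ| := by simpa using abs_sub_le_of_uIoc hs
    have hdist : dist ((s, y') : ℝ × ℝ) ((t₀, y₀) : ℝ × ℝ) < δ₁ := by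
      rw [Prod.dist_eq]
      apply max_lt
      · rw [Real.dist_eq]; exact lt_of_le_of_lt h1s hτδ₁
      · rw [Real.dist_eq, hy', add_sub_cancel_left]; exact hηδ₁
    have := Hδ₁ hdist
    rw [Real.dist_eq] at this
    rw [Real.norm_eq_abs]
    exact le_of_lt this
  have boundA' : ‖∫ s in t₀..(t₀+τ), (h s y' - h t₀ y₀)‖ ≤ (c/2) * |τ| := by
    simpa using boundA
  -- bound on B
  have pointB : ∀ s ∈ Set.uIoc (0:ℝ) t₀,
      ‖h s y' - h s y₀ - h1 s y₀ * η‖ ≤ (c / (2 * (|t₀| + 1))) * |η| := by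
    intro s hs
    have hsIcc : s ∈ Set.uIcc (0:ℝ) t₀ := Set.uIoc_subset_uIcc hs
    have ftc : (∫ ζ in y₀..y', h1 s ζ) = h s y' - h s y₀ :=
      integral_eq_sub_of_hasDerivAt (fun ζ _ => hd s ζ) ((hxc1 s).intervalIntegrable _ _)
    have hrw : h s y' - h s y₀ - h1 s y₀ * η = ∫ ζ in y₀..y', (h1 s ζ - h1 s y₀) := by
      rw [intervalIntegral.integral_sub ((hxc1 s).intervalIntegrable _ _) intervalIntegrable_const,
        ftc, intervalIntegral.integral_const, smul_eq_mul, hy', add_sub_cancel_left]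
      ring
    rw [hrw]
    have step : ‖∫ ζ in y₀..y', (h1 s ζ - h1 s y₀)‖ ≤ (c / (2 * (|t₀| + 1))) * |y' - y₀| := by
      apply intervalIntegral.norm_integral_le_of_norm_le_const
      intro ζ hζ
      have h1ζ : |ζ - y₀| ≤ |η| := by
        have := abs_sub_le_of_uIoc hζ
        rwa [hy', add_sub_cancel_left] at this
      have hζIcc : ζ ∈ Set.Icc (y₀ - 1) (y₀ + 1) := by
        have := abs_le.1 (le_of_lt (lt_of_le_of_lt h1ζ hη1))
        constructor <;> [linarith [this.1]; linarith [this.2]]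
      have mem1 : ((s, ζ) : ℝ × ℝ) ∈ (Set.uIcc (0:ℝ) t₀) ×ˢ (Set.Icc (y₀ - 1) (y₀ + 1)) :=
        ⟨hsIcc, hζIcc⟩
      have mem2 : ((s, y₀) : ℝ × ℝ) ∈ (Set.uIcc (0:ℝ) t₀) ×ˢ (Set.Icc (y₀ - 1) (y₀ + 1)) :=
        ⟨hsIcc, ⟨by linarith, by linarith⟩⟩
      have hdist : dist ((s, ζ) : ℝ × ℝ) ((s, y₀) : ℝ × ℝ) < δ₂ := by
        rw [Prod.dist_eq]
        apply max_lt
        · simpa [Real.dist_eq] using hδ₂pos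
        · rw [Real.dist_eq]; exact lt_of_le_of_lt h1ζ hηδ₂
      have := Hδ₂ _ mem1 _ mem2 hdist
      rw [Real.dist_eq] at this
      rw [Real.norm_eq_abs]
      exact le_of_lt this
    rwa [hy', add_sub_cancel_left] at step
  have boundB : ‖∫ s in (0:ℝ)..t₀, (h s y' - h s y₀ - h1 s y₀ * η)‖
      ≤ ((c / (2 * (|t₀| + 1))) * |η|) * |t₀ - 0| :=
    intervalIntegral.norm_integral_le_of_norm_le_const pointB
  -- assemble
  have hq0 : (0:ℝ) ≤ ‖((τ, η) : ℝ × ℝ)‖ := norm_nonneg _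
  have hcancel : (c / (2 * (|t₀| + 1))) * (|t₀| + 1) = c / 2 := by
    field_simp
  have main : ‖(∫ s in (0:ℝ)..(t₀+τ), h s y') - (∫ s in (0:ℝ)..t₀, h s y₀)
      - (h t₀ y₀ * τ + (∫ s in (0:ℝ)..t₀, h1 s y₀) * η)‖ ≤ c * ‖((τ, η) : ℝ × ℝ)‖ := by
    rw [keyeq]
    calc ‖(∫ s in t₀..(t₀+τ), (h s y' - h t₀ y₀))
          + ∫ s in (0:ℝ)..t₀, (h s y' - h s y₀ - h1 s y₀ * η)‖
        ≤ ‖∫ s in t₀..(t₀+τ), (h s y' - h t₀ y₀)‖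
          + ‖∫ s in (0:ℝ)..t₀, (h s y' - h s y₀ - h1 s y₀ * η)‖ := norm_add_le _ _
      _ ≤ (c/2) * |τ| + ((c / (2 * (|t₀| + 1))) * |η|) * |t₀ - 0| :=
          add_le_add boundA' boundB
      _ ≤ c * ‖((τ, η) : ℝ × ℝ)‖ := by
          rw [sub_zero]
          have hε : (0:ℝ) ≤ c / (2 * (|t₀| + 1)) := by positivity
          nlinarith [hτle, hηle, abs_nonneg t₀, abs_nonneg η, abs_nonneg τ, hcpos, hcancel,
            mul_le_mul_of_nonneg_left hηle hε]
  simpa [ContinuousLinearMap.add_apply, ContinuousLinearMap.smul_apply, smul_eq_mul,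
    Prod.fst_add, Prod.snd_add] using main

private lemma keyPathT {h h1 : ℝ → ℝ → ℝ}
    (hc : Continuous (Function.uncurry h))
    (hc1 : Continuous (Function.uncurry h1))
    (hd : ∀ s y, HasDerivAt (h s) (h1 s y) y)
    (c x t : ℝ) :
    HasDerivAt (fun τ => ∫ s in (0:ℝ)..τ, h s (x + c * τ))
      (h t (x + c * t) + c * ∫ s in (0:ℝ)..t, h1 s (x + c * t)) t := by
  have hp : HasDerivAt (fun τ : ℝ => ((τ, x + c * τ) : ℝ × ℝ)) (((1 : ℝ), c) : ℝ × ℝ) t := by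
    apply HasDerivAt.prodMk (hasDerivAt_id t)
    simpa using ((hasDerivAt_id t).const_mul c).const_add x
  have h2 := (keyF hc hc1 hd t (x + c * t)).comp_hasDerivAt t hp
  have hval : ((h t (x + c * t)) • (ContinuousLinearMap.fst ℝ ℝ ℝ)
      + (∫ s in (0:ℝ)..t, h1 s (x + c * t)) • (ContinuousLinearMap.snd ℝ ℝ ℝ))
      (((1 : ℝ), c) : ℝ × ℝ) = h t (x + c * t) + c * ∫ s in (0:ℝ)..t, h1 s (x + c * t) := by
    simp [smul_eq_mul, mul_comm]
  rw [← hval]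
  exact h2

private lemma keyPathX {h h1 : ℝ → ℝ → ℝ}
    (hc : Continuous (Function.uncurry h))
    (hc1 : Continuous (Function.uncurry h1))
    (hd : ∀ s y, HasDerivAt (h s) (h1 s y) y)
    (c t x : ℝ) :
    HasDerivAt (fun ξ => ∫ s in (0:ℝ)..t, h s (ξ + c * t))
      (∫ s in (0:ℝ)..t, h1 s (x + c * t)) x := by
  have hp : HasDerivAt (fun ξ : ℝ => ((t, ξ + c * t) : ℝ × ℝ)) (((0 : ℝ), (1:ℝ)) : ℝ × ℝ) x := by
    apply HasDerivAt.prodMk (hasDerivAt_const x t)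
    simpa using (hasDerivAt_id x).add_const (c * t)
  have h2 := (keyF hc hc1 hd t (x + c * t)).comp_hasDerivAt x hp
  have hval : ((h t (x + c * t)) • (ContinuousLinearMap.fst ℝ ℝ ℝ)
      + (∫ s in (0:ℝ)..t, h1 s (x + c * t)) • (ContinuousLinearMap.snd ℝ ℝ ℝ))
      (((0 : ℝ), (1:ℝ)) : ℝ × ℝ) = ∫ s in (0:ℝ)..t, h1 s (x + c * t) := by
    simp [smul_eq_mul]
  rw [← hval]
  exact h2

private noncomputable def G (z₁ : ℝ) (f : ℝ → ℝ → ℝ) (s y : ℝ) : ℝ := f s (y - z₁ * s)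
private noncomputable def G1 (z₁ : ℝ) (f : ℝ → ℝ → ℝ) (s y : ℝ) : ℝ := deriv (f s) (y - z₁ * s)
private noncomputable def G2 (z₁ : ℝ) (f : ℝ → ℝ → ℝ) (s y : ℝ) : ℝ :=
  deriv (deriv (f s)) (y - z₁ * s)

/-- **Example 1 of the paper:** the explicit solution of
`u_tt − 2z₁ u_tx + z₁² u_xx = f` (double characteristic root `z₁`) with initial data
`u(0,x) = φ₁(x)`, `u_t(0,x) = φ₂(x)`, given by
`u(t,x) = φ₁(x+z₁t) + t·φ₂(x+z₁t) − z₁t·φ₁'(x+z₁t) + ∫₀ᵗ (t−s)·f(s, x+z₁(t−s)) ds`. -/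
theorem example1_double_root (z₁ : ℝ) (φ₁ φ₂ : ℝ → ℝ) (f : ℝ → ℝ → ℝ)
    (hφ₁ : ContDiff ℝ 3 φ₁) (hφ₂ : ContDiff ℝ 2 φ₂)
    (hf : ContDiff ℝ 1 (Function.uncurry f))
    (hfx : ∀ t, Differentiable ℝ (deriv (f t)))
    (hfxx : Continuous (Function.uncurry fun t x => deriv (deriv (f t)) x))
    (u : ℝ → ℝ → ℝ)
    (hu : ∀ t x, u t x = φ₁ (x + z₁ * t) + t * φ₂ (x + z₁ * t)
        - z₁ * t * deriv φ₁ (x + z₁ * t)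
        + ∫ s in (0:ℝ)..t, (t - s) * f s (x + z₁ * (t - s))) :
    ∀ t x,
      (deriv (fun τ => deriv (fun σ => u σ x) τ) t
          - 2 * z₁ * deriv (fun τ => deriv (fun ξ => u τ ξ) x) t
          + z₁ ^ 2 * deriv (deriv (u t)) x = f t x)
        ∧ u 0 x = φ₁ x
        ∧ deriv (fun τ => u τ x) 0 = φ₂ x := by
  -- regularity of φ₁, φ₂
  have h32 : (3 : WithTop ℕ∞) = 2 + 1 := by norm_num
  have h21 : (2 : WithTop ℕ∞) = 1 + 1 := by norm_num
  have hφ₁d : Differentiable ℝ φ₁ := hφ₁.differentiable (by norm_num)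
  have hφ₁' : ContDiff ℝ 2 (deriv φ₁) := (contDiff_succ_iff_deriv.1 (h32 ▸ hφ₁)).2.2
  have hφ₁'d : Differentiable ℝ (deriv φ₁) := hφ₁'.differentiable (by norm_num)
  have hφ₁'' : ContDiff ℝ 1 (deriv (deriv φ₁)) := (contDiff_succ_iff_deriv.1 (h21 ▸ hφ₁')).2.2
  have hφ₁''d : Differentiable ℝ (deriv (deriv φ₁)) := hφ₁''.differentiable (by norm_num)
  have hφ₂d : Differentiable ℝ φ₂ := hφ₂.differentiable (by norm_num)
  have hφ₂' : ContDiff ℝ 1 (deriv φ₂) := (contDiff_succ_iff_deriv.1 (h21 ▸ hφ₂)).2.2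
  have hφ₂'d : Differentiable ℝ (deriv φ₂) := hφ₂'.differentiable (by norm_num)
  -- regularity of f
  have hfd : Differentiable ℝ (Function.uncurry f) := hf.differentiable (by norm_num)
  have hfs : ∀ s x : ℝ, HasDerivAt (f s) (deriv (f s) x) x := by
    intro s x
    have h1 : DifferentiableAt ℝ (f s) x :=
      (hfd (s, x)).comp x (DifferentiableAt.prodMk (differentiableAt_const s) differentiableAt_id)
    exact h1.hasDerivAt
  have hderiv_eq : ∀ s x : ℝ, deriv (f s) x = fderiv ℝ (Function.uncurry f) (s, x) (0, 1) := by
    intro s x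
    have hp : HasDerivAt (fun y : ℝ => ((s, y) : ℝ × ℝ)) (((0:ℝ), (1:ℝ)) : ℝ × ℝ) x :=
      HasDerivAt.prodMk (hasDerivAt_const x s) (hasDerivAt_id x)
    have h2 : HasDerivAt (f s) (fderiv ℝ (Function.uncurry f) (s, x) (0, 1)) x :=
      ((hfd (s, x)).hasFDerivAt).comp_hasDerivAt x hp
    exact h2.deriv
  have hdc : Continuous fun p : ℝ × ℝ => deriv (f p.1) p.2 := by
    have h1 : Continuous fun p : ℝ × ℝ => fderiv ℝ (Function.uncurry f) p (0, 1) :=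
      (hf.continuous_fderiv (by norm_num)).clm_apply continuous_const
    have h2 : (fun p : ℝ × ℝ => deriv (f p.1) p.2)
        = fun p : ℝ × ℝ => fderiv ℝ (Function.uncurry f) p (0, 1) :=
      funext fun p => hderiv_eq p.1 p.2
    rw [h2]; exact h1
  -- the shifted functions
  have hm : Continuous fun p : ℝ × ℝ => ((p.1, p.2 - z₁ * p.1) : ℝ × ℝ) :=
    continuous_fst.prodMk (continuous_snd.sub (continuous_const.mul continuous_fst))
  have hGc : Continuous (Function.uncurry (G z₁ f)) := hf.continuous.comp hm
  have hG1c : Continuous (Function.uncurry (G1 z₁ f)) := hdc.comp hm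
  have hG2c : Continuous (Function.uncurry (G2 z₁ f)) := hfxx.comp hm
  have hGd : ∀ s y, HasDerivAt (G z₁ f s) (G1 z₁ f s y) y := by
    intro s y
    have := (hfs s (y - z₁ * s)).comp y ((hasDerivAt_id y).sub_const (z₁ * s))
    rw [mul_one] at this
    exact this
  have hG1d : ∀ s y, HasDerivAt (G1 z₁ f s) (G2 z₁ f s y) y := by
    intro s y
    have := ((hfx s (y - z₁ * s)).hasDerivAt).comp y ((hasDerivAt_id y).sub_const (z₁ * s))
    rw [mul_one] at this
    exact this
  have hsGc : Continuous (Function.uncurry fun s y => s * G z₁ f s y) :=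
    continuous_fst.mul hGc
  have hsG1c : Continuous (Function.uncurry fun s y => s * G1 z₁ f s y) :=
    continuous_fst.mul hG1c
  have hsG2c : Continuous (Function.uncurry fun s y => s * G2 z₁ f s y) :=
    continuous_fst.mul hG2c
  have hsGd : ∀ s y, HasDerivAt (fun y => s * G z₁ f s y) (s * G1 z₁ f s y) y :=
    fun s y => (hGd s y).const_mul s
  have hsG1d : ∀ s y, HasDerivAt (fun y => s * G1 z₁ f s y) (s * G2 z₁ f s y) y :=
    fun s y => (hG1d s y).const_mul s
  have hGcy : ∀ y : ℝ, Continuous fun s => G z₁ f s y := fun y =>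
    hGc.comp (continuous_id.prodMk continuous_const)
  -- rewrite of the Duhamel integral
  have hint : ∀ t x : ℝ, (∫ s in (0:ℝ)..t, (t - s) * f s (x + z₁ * (t - s)))
      = t * (∫ s in (0:ℝ)..t, G z₁ f s (x + z₁ * t))
        - ∫ s in (0:ℝ)..t, s * G z₁ f s (x + z₁ * t) := by
    intro t x
    have h1 : Set.EqOn (fun s => (t - s) * f s (x + z₁ * (t - s)))
        (fun s => t * G z₁ f s (x + z₁ * t) - s * G z₁ f s (x + z₁ * t))
        (Set.uIcc (0:ℝ) t) := by
      intro s _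
      have harg : x + z₁ * (t - s) = x + z₁ * t - z₁ * s := by ring
      simp only [G, harg]
      ring
    rw [intervalIntegral.integral_congr h1,
      intervalIntegral.integral_sub (f := fun s => t * G z₁ f s (x + z₁ * t)) (g := fun s => s * G z₁ f s (x + z₁ * t)) ((continuous_const.mul (hGcy _)).intervalIntegrable _ _)
        ((continuous_id'.mul (hGcy _)).intervalIntegrable _ _),
      intervalIntegral.integral_const_mul]
  have hu' : ∀ t x : ℝ, u t x = φ₁ (x + z₁ * t) + t * φ₂ (x + z₁ * t)
      - z₁ * (t * deriv φ₁ (x + z₁ * t))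
      + (t * (∫ s in (0:ℝ)..t, G z₁ f s (x + z₁ * t))
         - ∫ s in (0:ℝ)..t, s * G z₁ f s (x + z₁ * t)) := by
    intro t x; rw [hu, hint]; ring
  -- first time derivative (simplified form)
  have hUt : ∀ τ ξ : ℝ, HasDerivAt (fun σ => u σ ξ)
      (φ₂ (ξ + z₁ * τ) + z₁ * (τ * deriv φ₂ (ξ + z₁ * τ))
        - z₁ * (z₁ * (τ * deriv (deriv φ₁) (ξ + z₁ * τ)))
        + (∫ s in (0:ℝ)..τ, G z₁ f s (ξ + z₁ * τ))
        + z₁ * (τ * ∫ s in (0:ℝ)..τ, G1 z₁ f s (ξ + z₁ * τ))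
        - z₁ * (∫ s in (0:ℝ)..τ, s * G1 z₁ f s (ξ + z₁ * τ))) τ := by
    intro τ ξ
    have hfun : (fun σ => u σ ξ) = fun σ =>
        φ₁ (ξ + z₁ * σ) + σ * φ₂ (ξ + z₁ * σ) - z₁ * (σ * deriv φ₁ (ξ + z₁ * σ))
        + (σ * (∫ s in (0:ℝ)..σ, G z₁ f s (ξ + z₁ * σ))
           - ∫ s in (0:ℝ)..σ, s * G z₁ f s (ξ + z₁ * σ)) :=
      funext fun σ => hu' σ ξ
    rw [hfun]
    have haff : HasDerivAt (fun σ : ℝ => ξ + z₁ * σ) z₁ τ := by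
      simpa using ((hasDerivAt_id' (x := τ)).const_mul z₁).const_add ξ
    have c1 : HasDerivAt (fun σ => φ₁ (ξ + z₁ * σ)) (deriv φ₁ (ξ + z₁ * τ) * z₁) τ :=
      ((hφ₁d _).hasDerivAt).comp τ haff
    have c2 : HasDerivAt (fun σ => σ * φ₂ (ξ + z₁ * σ))
        (1 * φ₂ (ξ + z₁ * τ) + τ * (deriv φ₂ (ξ + z₁ * τ) * z₁)) τ :=
      (hasDerivAt_id' (x := τ)).mul (((hφ₂d _).hasDerivAt).comp τ haff)
    have c3 : HasDerivAt (fun σ => z₁ * (σ * deriv φ₁ (ξ + z₁ * σ)))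
        (z₁ * (1 * deriv φ₁ (ξ + z₁ * τ) + τ * (deriv (deriv φ₁) (ξ + z₁ * τ) * z₁))) τ :=
      ((hasDerivAt_id' (x := τ)).mul (((hφ₁'d _).hasDerivAt).comp τ haff)).const_mul z₁
    have c4 : HasDerivAt (fun σ => σ * ∫ s in (0:ℝ)..σ, G z₁ f s (ξ + z₁ * σ))
        (1 * (∫ s in (0:ℝ)..τ, G z₁ f s (ξ + z₁ * τ))
          + τ * (G z₁ f τ (ξ + z₁ * τ) + z₁ * ∫ s in (0:ℝ)..τ, G1 z₁ f s (ξ + z₁ * τ))) τ :=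
      (hasDerivAt_id' (x := τ)).mul (keyPathT hGc hG1c hGd z₁ ξ τ)
    have c5 : HasDerivAt (fun σ => ∫ s in (0:ℝ)..σ, s * G z₁ f s (ξ + z₁ * σ))
        (τ * G z₁ f τ (ξ + z₁ * τ) + z₁ * ∫ s in (0:ℝ)..τ, s * G1 z₁ f s (ξ + z₁ * τ)) τ :=
      keyPathT hsGc hsG1c hsGd z₁ ξ τ
    have hsum := ((c1.add c2).sub c3).add (c4.sub c5)
    exact hsum.congr_deriv (by ring)
  -- first space derivative (simplified form)
  have hUx : ∀ τ ξ : ℝ, HasDerivAt (fun η => u τ η)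
      (deriv φ₁ (ξ + z₁ * τ) + τ * deriv φ₂ (ξ + z₁ * τ)
        - z₁ * (τ * deriv (deriv φ₁) (ξ + z₁ * τ))
        + (τ * (∫ s in (0:ℝ)..τ, G1 z₁ f s (ξ + z₁ * τ))
           - ∫ s in (0:ℝ)..τ, s * G1 z₁ f s (ξ + z₁ * τ))) ξ := by
    intro τ ξ
    have hfun : (fun η => u τ η) = fun η =>
        φ₁ (η + z₁ * τ) + τ * φ₂ (η + z₁ * τ) - z₁ * (τ * deriv φ₁ (η + z₁ * τ))
        + (τ * (∫ s in (0:ℝ)..τ, G z₁ f s (η + z₁ * τ))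
           - ∫ s in (0:ℝ)..τ, s * G z₁ f s (η + z₁ * τ)) :=
      funext fun η => hu' τ η
    rw [hfun]
    have haff : HasDerivAt (fun η : ℝ => η + z₁ * τ) 1 ξ := (hasDerivAt_id' (x := ξ)).add_const _
    have c1 : HasDerivAt (fun η => φ₁ (η + z₁ * τ)) (deriv φ₁ (ξ + z₁ * τ) * 1) ξ :=
      ((hφ₁d _).hasDerivAt).comp ξ haff
    have c2 : HasDerivAt (fun η => τ * φ₂ (η + z₁ * τ)) (τ * (deriv φ₂ (ξ + z₁ * τ) * 1)) ξ :=
      (((hφ₂d _).hasDerivAt).comp ξ haff).const_mul τ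
    have c3 : HasDerivAt (fun η => z₁ * (τ * deriv φ₁ (η + z₁ * τ)))
        (z₁ * (τ * (deriv (deriv φ₁) (ξ + z₁ * τ) * 1))) ξ :=
      ((((hφ₁'d _).hasDerivAt).comp ξ haff).const_mul τ).const_mul z₁
    have c4 : HasDerivAt (fun η => τ * ∫ s in (0:ℝ)..τ, G z₁ f s (η + z₁ * τ))
        (τ * ∫ s in (0:ℝ)..τ, G1 z₁ f s (ξ + z₁ * τ)) ξ :=
      (keyPathX hGc hG1c hGd z₁ τ ξ).const_mul τ
    have c5 : HasDerivAt (fun η => ∫ s in (0:ℝ)..τ, s * G z₁ f s (η + z₁ * τ))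
        (∫ s in (0:ℝ)..τ, s * G1 z₁ f s (ξ + z₁ * τ)) ξ :=
      keyPathX hsGc hsG1c hsGd z₁ τ ξ
    have hsum := ((c1.add c2).sub c3).add (c4.sub c5)
    exact hsum.congr_deriv (by ring)
  intro t x
  refine ⟨?_, ?_, ?_⟩
  · -- the PDE
    have h1 : (fun τ => deriv (fun σ => u σ x) τ) = fun τ =>
        φ₂ (x + z₁ * τ) + z₁ * (τ * deriv φ₂ (x + z₁ * τ))
        - z₁ * (z₁ * (τ * deriv (deriv φ₁) (x + z₁ * τ)))
        + (∫ s in (0:ℝ)..τ, G z₁ f s (x + z₁ * τ))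
        + z₁ * (τ * ∫ s in (0:ℝ)..τ, G1 z₁ f s (x + z₁ * τ))
        - z₁ * (∫ s in (0:ℝ)..τ, s * G1 z₁ f s (x + z₁ * τ)) :=
      funext fun τ => (hUt τ x).deriv
    have h2 : (fun τ => deriv (fun ξ => u τ ξ) x) = fun τ =>
        deriv φ₁ (x + z₁ * τ) + τ * deriv φ₂ (x + z₁ * τ)
        - z₁ * (τ * deriv (deriv φ₁) (x + z₁ * τ))
        + (τ * (∫ s in (0:ℝ)..τ, G1 z₁ f s (x + z₁ * τ))
           - ∫ s in (0:ℝ)..τ, s * G1 z₁ f s (x + z₁ * τ)) :=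
      funext fun τ => (hUx τ x).deriv
    have h3 : deriv (u t) = fun η =>
        deriv φ₁ (η + z₁ * t) + t * deriv φ₂ (η + z₁ * t)
        - z₁ * (t * deriv (deriv φ₁) (η + z₁ * t))
        + (t * (∫ s in (0:ℝ)..t, G1 z₁ f s (η + z₁ * t))
           - ∫ s in (0:ℝ)..t, s * G1 z₁ f s (η + z₁ * t)) :=
      funext fun η => (hUx t η).deriv
    rw [h1, h2, h3]
    have haff : HasDerivAt (fun σ : ℝ => x + z₁ * σ) z₁ t := by
      simpa using ((hasDerivAt_id' (x := t)).const_mul z₁).const_add x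
    have haffx : HasDerivAt (fun η : ℝ => η + z₁ * t) 1 x := (hasDerivAt_id' (x := x)).add_const _
    -- second time derivative
    have b1 : HasDerivAt (fun τ => φ₂ (x + z₁ * τ)) (deriv φ₂ (x + z₁ * t) * z₁) t :=
      ((hφ₂d _).hasDerivAt).comp t haff
    have b2 : HasDerivAt (fun τ => z₁ * (τ * deriv φ₂ (x + z₁ * τ)))
        (z₁ * (1 * deriv φ₂ (x + z₁ * t) + t * (deriv (deriv φ₂) (x + z₁ * t) * z₁))) t :=
      ((hasDerivAt_id' (x := t)).mul (((hφ₂'d _).hasDerivAt).comp t haff)).const_mul z₁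
    have b3 : HasDerivAt (fun τ => z₁ * (z₁ * (τ * deriv (deriv φ₁) (x + z₁ * τ))))
        (z₁ * (z₁ * (1 * deriv (deriv φ₁) (x + z₁ * t)
          + t * (deriv (deriv (deriv φ₁)) (x + z₁ * t) * z₁)))) t :=
      (((hasDerivAt_id' (x := t)).mul
        (((hφ₁''d _).hasDerivAt).comp t haff)).const_mul z₁).const_mul z₁
    have b4 : HasDerivAt (fun τ => ∫ s in (0:ℝ)..τ, G z₁ f s (x + z₁ * τ))
        (G z₁ f t (x + z₁ * t) + z₁ * ∫ s in (0:ℝ)..t, G1 z₁ f s (x + z₁ * t)) t :=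
      keyPathT hGc hG1c hGd z₁ x t
    have b5 : HasDerivAt (fun τ => z₁ * (τ * ∫ s in (0:ℝ)..τ, G1 z₁ f s (x + z₁ * τ)))
        (z₁ * (1 * (∫ s in (0:ℝ)..t, G1 z₁ f s (x + z₁ * t))
          + t * (G1 z₁ f t (x + z₁ * t) + z₁ * ∫ s in (0:ℝ)..t, G2 z₁ f s (x + z₁ * t)))) t :=
      ((hasDerivAt_id' (x := t)).mul (keyPathT hG1c hG2c hG1d z₁ x t)).const_mul z₁
    have b6 : HasDerivAt (fun τ => z₁ * (∫ s in (0:ℝ)..τ, s * G1 z₁ f s (x + z₁ * τ)))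
        (z₁ * (t * G1 z₁ f t (x + z₁ * t) + z₁ * ∫ s in (0:ℝ)..t, s * G2 z₁ f s (x + z₁ * t))) t :=
      (keyPathT hsG1c hsG2c hsG1d z₁ x t).const_mul z₁
    have hUtt := ((((b1.add b2).sub b3).add b4).add b5).sub b6
    -- second mixed derivative
    have e1 : HasDerivAt (fun τ => deriv φ₁ (x + z₁ * τ))
        (deriv (deriv φ₁) (x + z₁ * t) * z₁) t :=
      ((hφ₁'d _).hasDerivAt).comp t haff
    have e2 : HasDerivAt (fun τ => τ * deriv φ₂ (x + z₁ * τ))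
        (1 * deriv φ₂ (x + z₁ * t) + t * (deriv (deriv φ₂) (x + z₁ * t) * z₁)) t :=
      (hasDerivAt_id' (x := t)).mul (((hφ₂'d _).hasDerivAt).comp t haff)
    have e3 : HasDerivAt (fun τ => z₁ * (τ * deriv (deriv φ₁) (x + z₁ * τ)))
        (z₁ * (1 * deriv (deriv φ₁) (x + z₁ * t)
          + t * (deriv (deriv (deriv φ₁)) (x + z₁ * t) * z₁))) t :=
      ((hasDerivAt_id' (x := t)).mul (((hφ₁''d _).hasDerivAt).comp t haff)).const_mul z₁
    have e4 : HasDerivAt (fun τ => τ * ∫ s in (0:ℝ)..τ, G1 z₁ f s (x + z₁ * τ))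
        (1 * (∫ s in (0:ℝ)..t, G1 z₁ f s (x + z₁ * t))
          + t * (G1 z₁ f t (x + z₁ * t) + z₁ * ∫ s in (0:ℝ)..t, G2 z₁ f s (x + z₁ * t))) t :=
      (hasDerivAt_id' (x := t)).mul (keyPathT hG1c hG2c hG1d z₁ x t)
    have e5 : HasDerivAt (fun τ => ∫ s in (0:ℝ)..τ, s * G1 z₁ f s (x + z₁ * τ))
        (t * G1 z₁ f t (x + z₁ * t) + z₁ * ∫ s in (0:ℝ)..t, s * G2 z₁ f s (x + z₁ * t)) t :=
      keyPathT hsG1c hsG2c hsG1d z₁ x t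
    have hUtx := ((e1.add e2).sub e3).add (e4.sub e5)
    -- second space derivative
    have f1 : HasDerivAt (fun η => deriv φ₁ (η + z₁ * t))
        (deriv (deriv φ₁) (x + z₁ * t) * 1) x :=
      ((hφ₁'d _).hasDerivAt).comp x haffx
    have f2 : HasDerivAt (fun η => t * deriv φ₂ (η + z₁ * t))
        (t * (deriv (deriv φ₂) (x + z₁ * t) * 1)) x :=
      (((hφ₂'d _).hasDerivAt).comp x haffx).const_mul t
    have f3 : HasDerivAt (fun η => z₁ * (t * deriv (deriv φ₁) (η + z₁ * t)))
        (z₁ * (t * (deriv (deriv (deriv φ₁)) (x + z₁ * t) * 1))) x :=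
      ((((hφ₁''d _).hasDerivAt).comp x haffx).const_mul t).const_mul z₁
    have f4 : HasDerivAt (fun η => t * ∫ s in (0:ℝ)..t, G1 z₁ f s (η + z₁ * t))
        (t * ∫ s in (0:ℝ)..t, G2 z₁ f s (x + z₁ * t)) x :=
      (keyPathX hG1c hG2c hG1d z₁ t x).const_mul t
    have f5 : HasDerivAt (fun η => ∫ s in (0:ℝ)..t, s * G1 z₁ f s (η + z₁ * t))
        (∫ s in (0:ℝ)..t, s * G2 z₁ f s (x + z₁ * t)) x :=
      keyPathX hsG1c hsG2c hsG1d z₁ t x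
    have hUxx := ((f1.add f2).sub f3).add (f4.sub f5)
    simp only [Pi.add_def, Pi.sub_def] at hUtt hUtx hUxx
    rw [hUtt.deriv, hUtx.deriv, hUxx.deriv]
    have hGt : G z₁ f t (x + z₁ * t) = f t x := by
      simp only [G]
      congr 1
      ring
    rw [hGt]
    ring
  · rw [hu]; simp
  · rw [(hUt 0 x).deriv]; simp
end
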